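/- arXiv:nlin/0110014 — 10 statements merged into one kernel-verified Lean document; each statement's English description precedes it below -/
import Mathlib

section
/- Fix n ≥ 2 and let f : ℝ \ {0} → ℝ be continuously differentiable and either even or odd. On the phase space of points (x,p) ∈ ℝⁿ × ℝⁿ with the x_i pairwise distinct, define H(x,p) = Σ_{j=1}^n cosh(p_j) Π_{k≠j} f(x_j - x_k), P(x,p) = Σ_{j=1}^n sinh(p_j) Π_{k≠j} f(x_j - x_k), and B(x,p) = Σ_{j=1}^n x_j, and define the Poisson bracket of two such functions by {A,C} = Σ_{i=1}^n (∂A/∂p_i · ∂C/∂x_i − ∂A/∂x_i · ∂C/∂p_i). Then {H,B} = P and {P,B} = H hold identically, and {H,P} = 0 holds identically if and only if for all pairwise distinct x₁,…,xₙ one has Σ_{j=1}^n Σ_{k≠j} (f²)'(x_j - x_k) Π_{l≠j,k} f²(x_j - x_l) = 0. -/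
open Finset

section RSaux

private lemma RS_pderiv {n : ℕ} (c c' : ℝ → ℝ) (hc : ∀ t, HasDerivAt c (c' t) t)
    (V : Fin n → ℝ) (p : Fin n → ℝ) (i : Fin n) :
    deriv (fun t => ∑ j : Fin n, c (Function.update p i t j) * V j) (p i)
      = c' (p i) * V i := by
  have h : (fun t => ∑ j : Fin n, c (Function.update p i t j) * V j)
      = fun t => c t * V i + ∑ j ∈ univ.erase i, c (p j) * V j := by
    funext t
    rw [← Finset.add_sum_erase _ _ (mem_univ i), Function.update_self]
    congr 1
    exact Finset.sum_congr rfl fun j hj => by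
      rw [Function.update_of_ne (mem_erase.1 hj).1]
  rw [h]
  exact (((hc (p i)).mul_const _).add_const _).deriv

private lemma RS_parity (f : ℝ → ℝ)
    (hpar : (∀ x : ℝ, x ≠ 0 → f (-x) = f x) ∨ (∀ x : ℝ, x ≠ 0 → f (-x) = -f x))
    (u : ℝ) (hu : u ≠ 0) :
    f u * deriv f (-u) + f (-u) * deriv f u = 0 := by
  have h1 : deriv (fun x => f (-x)) u = -deriv f (-u) := deriv_comp_neg f u
  rcases hpar with hpar | hpar
  · have heq : (fun x => f (-x)) =ᶠ[nhds u] f := by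
      filter_upwards [eventually_ne_nhds hu] with y hy using hpar y hy
    have h2 : deriv f (-u) = -deriv f u := by
      have := heq.deriv_eq
      rw [h1] at this
      linarith
    rw [h2, hpar u hu]; ring
  · have heq : (fun x => f (-x)) =ᶠ[nhds u] (fun x => -f x) := by
      filter_upwards [eventually_ne_nhds hu] with y hy using hpar y hy
    have h2 : deriv f (-u) = deriv f u := by
      have := heq.deriv_eq
      rw [h1, deriv.fun_neg] at this
      linarith
    rw [h2, hpar u hu]; ring

private lemma RS_xderiv {n : ℕ} (f : ℝ → ℝ)
    (hf : ∀ x : ℝ, x ≠ 0 → ContDiffAt ℝ 1 f x)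
    (c : Fin n → ℝ) (x : Fin n → ℝ) (hx : Function.Injective x) (i : Fin n) :
    HasDerivAt (fun t => ∑ j : Fin n, c j *
        ∏ k ∈ univ.erase j, f (Function.update x i t j - Function.update x i t k))
      (c i * (∑ k ∈ univ.erase i, deriv f (x i - x k) *
          ∏ l ∈ (univ.erase i).erase k, f (x i - x l))
        + ∑ j ∈ univ.erase i, c j *
            (-(deriv f (x j - x i)) * ∏ k ∈ (univ.erase j).erase i, f (x j - x k)))
      (x i) := by
  classical
  have hd : ∀ u : ℝ, u ≠ 0 → HasDerivAt f (deriv f u) u := fun u hu =>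
    ((hf u hu).differentiableAt one_ne_zero).hasDerivAt
  have hne : ∀ a b : Fin n, a ≠ b → x a - x b ≠ 0 := fun a b hab =>
    sub_ne_zero.2 fun h => hab (hx h)
  set d : Fin n → ℝ := fun j =>
    if j = i then
      c i * (∑ k ∈ univ.erase i, deriv f (x i - x k) *
        ∏ l ∈ (univ.erase i).erase k, f (x i - x l))
    else c j * (-(deriv f (x j - x i)) * ∏ k ∈ (univ.erase j).erase i, f (x j - x k))
    with hd_def
  have hsum : HasDerivAt (fun t => ∑ j : Fin n, c j *
      ∏ k ∈ univ.erase j, f (Function.update x i t j - Function.update x i t k))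
      (∑ j : Fin n, d j) (x i) := by
    apply HasDerivAt.fun_sum
    intro j _
    by_cases hj : j = i
    · subst hj
      have hfun : (fun t => c j * ∏ k ∈ univ.erase j, f (Function.update x j t j
            - Function.update x j t k))
          = fun t => c j * ∏ k ∈ univ.erase j, f (t - x k) := by
        funext t
        congr 1
        refine Finset.prod_congr rfl fun k hk => ?_
        rw [Function.update_self, Function.update_of_ne (mem_erase.1 hk).1]
      rw [hfun, hd_def]
      simp only [if_pos rfl]
      apply HasDerivAt.const_mul
      have hprod : HasDerivAt (fun t => ∏ k ∈ univ.erase j, f (t - x k))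
          (∑ k ∈ univ.erase j, (∏ l ∈ (univ.erase j).erase k, f (x j - x l)) •
            deriv f (x j - x k)) (x j) := by
        apply HasDerivAt.fun_finsetProd
        intro k hk
        have hk' : (k : Fin n) ≠ j := (mem_erase.1 hk).1
        have : HasDerivAt (fun t => f (t - x k)) (deriv f (x j - x k) * 1) (x j) :=
          (hd _ (hne j k hk'.symm)).comp (x j) ((hasDerivAt_id (x j)).sub_const (x k))
        simpa using this
      refine hprod.congr_deriv ?_
      exact Finset.sum_congr rfl fun k _ => by rw [smul_eq_mul, mul_comm]
    · have hij : i ∈ univ.erase j := mem_erase.2 ⟨fun h => hj h.symm, mem_univ i⟩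
      have hfun : (fun t => c j * ∏ k ∈ univ.erase j, f (Function.update x i t j
            - Function.update x i t k))
          = fun t => c j * (f (x j - t) *
              ∏ k ∈ (univ.erase j).erase i, f (x j - x k)) := by
        funext t
        congr 1
        rw [← Finset.mul_prod_erase _ _ hij, Function.update_self,
          Function.update_of_ne hj]
        congr 1
        refine Finset.prod_congr rfl fun k hk => ?_
        rw [Function.update_of_ne (mem_erase.1 hk).1]
      rw [hfun, hd_def]
      simp only [if_neg hj]
      apply HasDerivAt.const_mul
      have h1 : HasDerivAt (fun t => f (x j - t)) (deriv f (x j - x i) * (0 - 1)) (x i) :=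
        (hd _ (hne j i hj)).comp (x i)
          ((hasDerivAt_const (x i) (x j)).sub (hasDerivAt_id (x i)))
      have := h1.mul_const (∏ k ∈ (univ.erase j).erase i, f (x j - x k))
      convert this using 1
      ring
  convert hsum using 1
  rw [← Finset.add_sum_erase _ d (mem_univ i), hd_def]
  simp only [if_pos rfl]
  congr 1
  exact Finset.sum_congr rfl fun j hj => by rw [if_neg (mem_erase.1 hj).1]

private lemma RS_antisym {n : ℕ} (f : ℝ → ℝ)
    (hpar : (∀ x : ℝ, x ≠ 0 → f (-x) = f x) ∨ (∀ x : ℝ, x ≠ 0 → f (-x) = -f x))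
    (x : Fin n → ℝ) (hx : Function.Injective x) (i j : Fin n) (hij : i ≠ j) :
    (∏ k ∈ univ.erase i, f (x i - x k)) *
        (-(deriv f (x j - x i)) * ∏ k ∈ (univ.erase j).erase i, f (x j - x k))
      + (∏ k ∈ univ.erase j, f (x j - x k)) *
        (-(deriv f (x i - x j)) * ∏ k ∈ (univ.erase i).erase j, f (x i - x k)) = 0 := by
  classical
  have hji : j ∈ univ.erase i := mem_erase.2 ⟨fun h => hij h.symm, mem_univ j⟩
  have hij' : i ∈ univ.erase j := mem_erase.2 ⟨hij, mem_univ i⟩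
  have hu : x i - x j ≠ 0 := sub_ne_zero.2 fun h => hij (hx h)
  have hVi : (∏ k ∈ univ.erase i, f (x i - x k))
      = f (x i - x j) * ∏ k ∈ (univ.erase i).erase j, f (x i - x k) :=
    (Finset.mul_prod_erase _ _ hji).symm
  have hVj : (∏ k ∈ univ.erase j, f (x j - x k))
      = f (x j - x i) * ∏ k ∈ (univ.erase j).erase i, f (x j - x k) :=
    (Finset.mul_prod_erase _ _ hij').symm
  rw [hVi, hVj, show x j - x i = -(x i - x j) from by ring]
  have hkey := RS_parity f hpar (x i - x j) hu
  set P1 := ∏ k ∈ (univ.erase i).erase j, f (x i - x k)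
  set P2 := ∏ k ∈ (univ.erase j).erase i, f (x j - x k)
  linear_combination (-(P1 * P2)) * hkey

end RSaux

/-- The Poisson bracket `{A,C} = ∑ i, (∂A/∂p_i · ∂C/∂x_i − ∂A/∂x_i · ∂C/∂p_i)`
of two functions on phase space `(x,p) ∈ ℝⁿ × ℝⁿ`. -/
noncomputable def pbrack {n : ℕ} (A C : (Fin n → ℝ) → (Fin n → ℝ) → ℝ)
    (x p : Fin n → ℝ) : ℝ :=
  ∑ i : Fin n,
    (deriv (fun t => A x (Function.update p i t)) (p i) *
        deriv (fun t => C (Function.update x i t) p) (x i) -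
      deriv (fun t => A (Function.update x i t) p) (x i) *
        deriv (fun t => C x (Function.update p i t)) (p i))

/-- The Ruijsenaars–Schneider Hamiltonian `H = ∑ⱼ cosh(pⱼ) ∏_{k≠j} f(xⱼ−x_k)`. -/
noncomputable def RS_H {n : ℕ} (f : ℝ → ℝ) (x p : Fin n → ℝ) : ℝ :=
  ∑ j : Fin n, Real.cosh (p j) * ∏ k ∈ univ.erase j, f (x j - x k)

/-- The momentum `P = ∑ⱼ sinh(pⱼ) ∏_{k≠j} f(xⱼ−x_k)`. -/
noncomputable def RS_P {n : ℕ} (f : ℝ → ℝ) (x p : Fin n → ℝ) : ℝ :=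
  ∑ j : Fin n, Real.sinh (p j) * ∏ k ∈ univ.erase j, f (x j - x k)

/-- The boost `B = ∑ⱼ xⱼ`. -/
noncomputable def RS_B {n : ℕ} (x _p : Fin n → ℝ) : ℝ := ∑ j : Fin n, x j

/-- the Ruijsenaars–Schneider ansatz realizes `{H,B}=P`, `{P,B}=H`,
and `{H,P}=0` holds identically iff the functional equation
`∑ⱼ ∂ⱼ ∏_{k≠j} f²(xⱼ−x_k) = 0` holds on all pairwise-distinct configurations. -/
theorem stmt_1 (n : ℕ) (hn : 2 ≤ n) (f : ℝ → ℝ)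
    (hf : ∀ x : ℝ, x ≠ 0 → ContDiffAt ℝ 1 f x)
    (hpar : (∀ x : ℝ, x ≠ 0 → f (-x) = f x) ∨ (∀ x : ℝ, x ≠ 0 → f (-x) = -f x)) :
    (∀ x p : Fin n → ℝ, Function.Injective x →
        pbrack (RS_H f) RS_B x p = RS_P f x p) ∧
    (∀ x p : Fin n → ℝ, Function.Injective x →
        pbrack (RS_P f) RS_B x p = RS_H f x p) ∧
    ((∀ x p : Fin n → ℝ, Function.Injective x →
        pbrack (RS_H f) (RS_P f) x p = 0) ↔
      (∀ x : Fin n → ℝ, Function.Injective x →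
        ∑ j : Fin n, ∑ k ∈ univ.erase j,
          deriv (fun t => (f t) ^ 2) (x j - x k) *
            ∏ l ∈ (univ.erase j).erase k, (f (x j - x l)) ^ 2 = 0)) := by
  classical
  have hd : ∀ u : ℝ, u ≠ 0 → HasDerivAt f (deriv f u) u := fun u hu =>
    ((hf u hu).differentiableAt one_ne_zero).hasDerivAt
  -- p-derivatives of H and P
  have hHp : ∀ (x p : Fin n → ℝ) (i : Fin n),
      deriv (fun t => ∑ j : Fin n, Real.cosh (Function.update p i t j) *
          ∏ k ∈ univ.erase j, f (x j - x k)) (p i)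
        = Real.sinh (p i) * ∏ k ∈ univ.erase i, f (x i - x k) := fun x p i =>
    RS_pderiv Real.cosh Real.sinh Real.hasDerivAt_cosh _ p i
  have hPp : ∀ (x p : Fin n → ℝ) (i : Fin n),
      deriv (fun t => ∑ j : Fin n, Real.sinh (Function.update p i t j) *
          ∏ k ∈ univ.erase j, f (x j - x k)) (p i)
        = Real.cosh (p i) * ∏ k ∈ univ.erase i, f (x i - x k) := fun x p i =>
    RS_pderiv Real.sinh Real.cosh Real.hasDerivAt_sinh _ p i
  -- derivatives of B
  have hBx : ∀ (x : Fin n → ℝ) (i : Fin n),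
      deriv (fun t => ∑ j : Fin n, Function.update x i t j) (x i) = 1 := by
    intro x i
    have h : (fun t => ∑ j : Fin n, Function.update x i t j)
        = fun t => t + ∑ j ∈ univ.erase i, x j := by
      funext t
      rw [← Finset.add_sum_erase _ _ (mem_univ i), Function.update_self]
      congr 1
      exact Finset.sum_congr rfl fun j hj => by
        rw [Function.update_of_ne (mem_erase.1 hj).1]
    rw [h]
    simpa using ((hasDerivAt_id (x i)).add_const (∑ j ∈ univ.erase i, x j)).deriv
  have hBp : ∀ (x p : Fin n → ℝ) (i : Fin n),
      deriv (fun t => ∑ j : Fin n, x j) (p i) = 0 := fun x p i => deriv_const _ _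
  refine ⟨?_, ?_, ?_⟩
  · -- {H,B} = P
    intro x p hx
    simp only [pbrack, RS_H, RS_B, RS_P]
    refine Finset.sum_congr rfl fun i _ => ?_
    rw [hHp x p i, hBx x i, hBp x p i]
    ring
  · -- {P,B} = H
    intro x p hx
    simp only [pbrack, RS_P, RS_B, RS_H]
    refine Finset.sum_congr rfl fun i _ => ?_
    rw [hPp x p i, hBx x i, hBp x p i]
    ring
  · -- {H,P} = 0 iff functional equation
    have key : ∀ x p : Fin n → ℝ, Function.Injective x →
        pbrack (RS_H f) (RS_P f) x p
          = -(1/2) * ∑ j : Fin n, ∑ k ∈ univ.erase j,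
              deriv (fun t => (f t) ^ 2) (x j - x k) *
                ∏ l ∈ (univ.erase j).erase k, (f (x j - x l)) ^ 2 := by
      intro x p hx
      have hne : ∀ a b : Fin n, a ≠ b → x a - x b ≠ 0 := fun a b hab =>
        sub_ne_zero.2 fun h => hab (hx h)
      set V : Fin n → ℝ := fun j => ∏ k ∈ univ.erase j, f (x j - x k) with hV
      set D : Fin n → ℝ := fun i => ∑ k ∈ univ.erase i, deriv f (x i - x k) *
        ∏ l ∈ (univ.erase i).erase k, f (x i - x l) with hD
      set A : Fin n → Fin n → ℝ := fun i j =>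
        -(deriv f (x j - x i)) * ∏ k ∈ (univ.erase j).erase i, f (x j - x k) with hA
      -- x-derivatives
      have hHx : ∀ i : Fin n,
          deriv (fun t => ∑ j : Fin n, Real.cosh (p j) *
              ∏ k ∈ univ.erase j, f (Function.update x i t j - Function.update x i t k))
            (x i)
          = Real.cosh (p i) * D i + ∑ j ∈ univ.erase i, Real.cosh (p j) * A i j :=
        fun i => (RS_xderiv f hf (fun j => Real.cosh (p j)) x hx i).deriv
      have hPx : ∀ i : Fin n,
          deriv (fun t => ∑ j : Fin n, Real.sinh (p j) *
              ∏ k ∈ univ.erase j, f (Function.update x i t j - Function.update x i t k))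
            (x i)
          = Real.sinh (p i) * D i + ∑ j ∈ univ.erase i, Real.sinh (p j) * A i j :=
        fun i => (RS_xderiv f hf (fun j => Real.sinh (p j)) x hx i).deriv
      have step1 : pbrack (RS_H f) (RS_P f) x p
          = ∑ i : Fin n, (-(V i * D i)
              + ∑ j ∈ univ.erase i, -(Real.cosh (p i - p j)) * (V i * A i j)) := by
        simp only [pbrack, RS_H, RS_P]
        refine Finset.sum_congr rfl fun i _ => ?_
        rw [hHp x p i, hPp x p i, hHx i, hPx i]
        have hsc : Real.sinh (p i) ^ 2 - Real.cosh (p i) ^ 2 = -1 := by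
          have := Real.cosh_sq_sub_sinh_sq (p i); linarith
        have hright : Real.sinh (p i) * V i * (∑ j ∈ univ.erase i, Real.sinh (p j) * A i j)
              - Real.cosh (p i) * V i * (∑ j ∈ univ.erase i, Real.cosh (p j) * A i j)
            = ∑ j ∈ univ.erase i, -(Real.cosh (p i - p j)) * (V i * A i j) := by
          rw [Finset.mul_sum, Finset.mul_sum, ← Finset.sum_sub_distrib]
          refine Finset.sum_congr rfl fun j _ => ?_
          rw [Real.cosh_sub]
          ring
        rw [← hright]
        linear_combination (V i * D i) * hsc
      rw [step1, Finset.sum_add_distrib]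
      -- the off-diagonal double sum vanishes by antisymmetry
      have hT : ∀ i j : Fin n, i ≠ j →
          -(Real.cosh (p i - p j)) * (V i * A i j)
            + -(Real.cosh (p j - p i)) * (V j * A j i) = 0 := by
        intro i j hij
        have hcs : Real.cosh (p j - p i) = Real.cosh (p i - p j) := by
          rw [show p j - p i = -(p i - p j) from by ring, Real.cosh_neg]
        rw [hcs]
        have hanti := RS_antisym f hpar x hx i j hij
        simp only [hV, hA]
        linear_combination (-(Real.cosh (p i - p j))) * hanti
      have hS2 : ∑ i : Fin n, ∑ j ∈ univ.erase i,
          -(Real.cosh (p i - p j)) * (V i * A i j) = 0 := by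
        have hswap : ∑ i : Fin n, ∑ j ∈ univ.erase i,
            -(Real.cosh (p i - p j)) * (V i * A i j)
            = ∑ i : Fin n, ∑ j ∈ univ.erase i,
              -(Real.cosh (p j - p i)) * (V j * A j i) := by
          exact Finset.sum_comm' (fun a b => by
            simp only [mem_univ, mem_erase, true_and, and_true]
            exact ⟨fun h => h.symm, fun h => h.symm⟩)
        have h2 : (∑ i : Fin n, ∑ j ∈ univ.erase i,
              -(Real.cosh (p i - p j)) * (V i * A i j))
            + ∑ i : Fin n, ∑ j ∈ univ.erase i,
              -(Real.cosh (p j - p i)) * (V j * A j i) = 0 := by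
          rw [← Finset.sum_add_distrib]
          refine Finset.sum_eq_zero fun i _ => ?_
          rw [← Finset.sum_add_distrib]
          refine Finset.sum_eq_zero fun j hj => ?_
          exact hT i j fun h => (mem_erase.1 hj).1 h.symm
        rw [← hswap] at h2
        linarith
      rw [hS2, add_zero]
      -- diagonal part equals -(1/2) of the functional-equation expression
      have hdiag : ∀ j : Fin n, ∀ k ∈ univ.erase j,
          deriv (fun t => (f t) ^ 2) (x j - x k) *
              ∏ l ∈ (univ.erase j).erase k, (f (x j - x l)) ^ 2
            = 2 * (V j * (deriv f (x j - x k) *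
                ∏ l ∈ (univ.erase j).erase k, f (x j - x l))) := by
        intro j k hk
        have hu : x j - x k ≠ 0 := hne j k fun h => (mem_erase.1 hk).1 h.symm
        have hderiv2 : deriv (fun t => (f t) ^ 2) (x j - x k)
            = 2 * f (x j - x k) * deriv f (x j - x k) := by
          have := ((hd _ hu).fun_pow 2).deriv
          simpa using this
        rw [hderiv2, Finset.prod_pow]
        simp only [hV]
        rw [← Finset.mul_prod_erase (univ.erase j) (fun l => f (x j - x l)) hk]
        ring
      have hFE : ∑ j : Fin n, ∑ k ∈ univ.erase j,
          deriv (fun t => (f t) ^ 2) (x j - x k) *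
            ∏ l ∈ (univ.erase j).erase k, (f (x j - x l)) ^ 2
          = 2 * ∑ i : Fin n, V i * D i := by
        rw [Finset.mul_sum]
        refine Finset.sum_congr rfl fun j _ => ?_
        simp only [hD]
        rw [Finset.mul_sum, Finset.mul_sum]
        exact Finset.sum_congr rfl fun k hk => hdiag j k hk
      rw [hFE]
      rw [Finset.sum_neg_distrib]
      ring
    constructor
    · intro h x hx
      have h0 := key x 0 hx
      rw [h x 0 hx] at h0
      linarith
    · intro h x p hx
      rw [key x p hx, h x hx]
      ring
end

section
/- For any constant c ∈ ℂ, the function F(z) = c + 1/sin²(z) satisfies the functional equation: for all complex x, y, z with x + y + z = 0 and sin(x) ≠ 0, sin(y) ≠ 0, sin(z) ≠ 0, the determinant of the 3×3 matrix with rows (1, 1, 1), (F(x), F(y), F(z)), (F'(x), F'(y), F'(z)) vanishes. -/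
open Complex

private lemma inv_sin_sq (x : ℂ) (hx : Complex.sin x ≠ 0) :
    (1:ℂ) / Complex.sin x ^ 2 = 1 + (Complex.cos x / Complex.sin x) ^ 2 := by
  field_simp
  exact (Complex.sin_sq_add_cos_sq x).symm

private lemma deriv_F (c : ℂ) (x : ℂ) (hx : Complex.sin x ≠ 0) :
    deriv (fun w => c + 1 / Complex.sin w ^ 2) x
      = -2 * Complex.cos x / Complex.sin x ^ 3 := by
  have h : HasDerivAt (fun w => c + 1 / Complex.sin w ^ 2)
      (-(↑2 * Complex.sin x ^ 1 * Complex.cos x) / (Complex.sin x ^ 2) ^ 2) x := by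
    have h1 := ((Complex.hasDerivAt_sin x).pow 2).inv (pow_ne_zero 2 hx)
    simpa [one_div] using h1.const_add c
  rw [h.deriv]
  field_simp

private lemma key (c a b d : ℂ) (h : a * b + b * d + d * a = 1) :
    Matrix.det !![(1 : ℂ), 1, 1;
        c + 1 + a ^ 2, c + 1 + b ^ 2, c + 1 + d ^ 2;
        -2 * a * (1 + a ^ 2), -2 * b * (1 + b ^ 2), -2 * d * (1 + d ^ 2)] = 0 := by
  simp [Matrix.det_fin_three]
  linear_combination (-2 * (b - a) * (d - a) * (d - b)) * h

/-- `F(z) = c + 1/sin²(z)` satisfies the determinantal functional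
equation `det [[1,1,1],[F(x),F(y),F(z)],[F'(x),F'(y),F'(z)]] = 0` whenever
`x + y + z = 0` and the sines are nonzero. -/
theorem stmt_3 (c : ℂ) :
    ∀ x y z : ℂ, x + y + z = 0 →
      Complex.sin x ≠ 0 → Complex.sin y ≠ 0 → Complex.sin z ≠ 0 →
      Matrix.det !![(1 : ℂ), 1, 1;
                    c + 1 / Complex.sin x ^ 2,
                      c + 1 / Complex.sin y ^ 2,
                      c + 1 / Complex.sin z ^ 2;
                    deriv (fun w => c + 1 / Complex.sin w ^ 2) x,
                      deriv (fun w => c + 1 / Complex.sin w ^ 2) y,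
                      deriv (fun w => c + 1 / Complex.sin w ^ 2) z] = 0 := by
  intro x y z hsum hx hy hz
  rw [deriv_F c x hx, deriv_F c y hy, deriv_F c z hz]
  have hFa : c + 1 / Complex.sin x ^ 2 = c + 1 + (Complex.cos x / Complex.sin x) ^ 2 := by
    rw [inv_sin_sq x hx]; ring
  have hFb : c + 1 / Complex.sin y ^ 2 = c + 1 + (Complex.cos y / Complex.sin y) ^ 2 := by
    rw [inv_sin_sq y hy]; ring
  have hFd : c + 1 / Complex.sin z ^ 2 = c + 1 + (Complex.cos z / Complex.sin z) ^ 2 := by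
    rw [inv_sin_sq z hz]; ring
  have hG : ∀ w : ℂ, Complex.sin w ≠ 0 →
      -2 * Complex.cos w / Complex.sin w ^ 3
        = -2 * (Complex.cos w / Complex.sin w) * (1 + (Complex.cos w / Complex.sin w) ^ 2) := by
    intro w hw
    rw [← inv_sin_sq w hw]
    ring
  have hcot : (Complex.cos x / Complex.sin x) * (Complex.cos y / Complex.sin y)
      + (Complex.cos y / Complex.sin y) * (Complex.cos z / Complex.sin z)
      + (Complex.cos z / Complex.sin z) * (Complex.cos x / Complex.sin x) = 1 := by
    have hzeq : z = -(x + y) := by linear_combination hsum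
    have hsz : Complex.sin z
        = -(Complex.sin x * Complex.cos y + Complex.cos x * Complex.sin y) := by
      rw [hzeq, Complex.sin_neg, Complex.sin_add]
    have hcz : Complex.cos z = Complex.cos x * Complex.cos y - Complex.sin x * Complex.sin y := by
      rw [hzeq, Complex.cos_neg, Complex.cos_add]
    field_simp
    rw [hsz, hcz]
    ring
  rw [hFa, hFb, hFd, hG x hx, hG y hy, hG z hz]
  exact key c _ _ _ hcot
end

section
/- The function F(z) = 1/sin²(z + π/3) satisfies the functional equation: for all complex x, y, z with x + y + z = 0 and sin(x + π/3) ≠ 0, sin(y + π/3) ≠ 0, sin(z + π/3) ≠ 0, the determinant of the 3×3 matrix with rows (1, 1, 1), (F(x), F(y), F(z)), (F'(x), F'(y), F'(z))) vanishes. -/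
lemma deriv_aux (d x : ℂ) (hx : Complex.sin (x + d) ≠ 0) :
    deriv (fun w => (Complex.sin (w + d) ^ 2)⁻¹) x
      = -2 * Complex.cos (x + d) / Complex.sin (x + d) ^ 3 := by
  have h1 : HasDerivAt (fun w : ℂ => Complex.sin (w + d)) (Complex.cos (x + d)) x := by
    simpa [Function.comp_def] using (Complex.hasDerivAt_sin (x + d)).comp x ((hasDerivAt_id x).add_const d)
  have h2 : HasDerivAt (fun w : ℂ => Complex.sin (w + d) ^ 2)
      (2 * Complex.sin (x + d) * Complex.cos (x + d)) x := by
    simpa [mul_comm, mul_assoc] using h1.fun_pow 2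
  have h3 := (h2.fun_inv (pow_ne_zero 2 hx)).deriv
  rw [h3]
  field_simp

/-- the shifted function `F(z) = 1/sin²(z + π/3)` satisfies the
determinantal functional equation
`det [[1,1,1],[F(x),F(y),F(z)],[F'(x),F'(y),F'(z)]] = 0` whenever `x + y + z = 0`
and the (shifted) sines are nonzero. -/
theorem stmt_4 :
    ∀ x y z : ℂ, x + y + z = 0 →
      Complex.sin (x + Real.pi / 3) ≠ 0 →
      Complex.sin (y + Real.pi / 3) ≠ 0 →
      Complex.sin (z + Real.pi / 3) ≠ 0 →
      Matrix.det !![(1 : ℂ), 1, 1;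
                    1 / Complex.sin (x + Real.pi / 3) ^ 2,
                      1 / Complex.sin (y + Real.pi / 3) ^ 2,
                      1 / Complex.sin (z + Real.pi / 3) ^ 2;
                    deriv (fun w => 1 / Complex.sin (w + Real.pi / 3) ^ 2) x,
                      deriv (fun w => 1 / Complex.sin (w + Real.pi / 3) ^ 2) y,
                      deriv (fun w => 1 / Complex.sin (w + Real.pi / 3) ^ 2) z] = 0 := by
  intro x y z hxyz hx hy hz
  set d : ℂ := (Real.pi : ℂ) / 3 with hd
  have h3 : (3 : ℂ) * d = (Real.pi : ℂ) := by rw [hd]; ring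
  have hzd : z + d = (Real.pi : ℂ) - ((x + d) + (y + d)) := by
    linear_combination hxyz + h3
  have hsz : Complex.sin (z + d)
      = Complex.sin (x + d) * Complex.cos (y + d)
        + Complex.cos (x + d) * Complex.sin (y + d) := by
    rw [hzd, Complex.sin_pi_sub, Complex.sin_add]
  have hcz : Complex.cos (z + d)
      = -(Complex.cos (x + d) * Complex.cos (y + d)
          - Complex.sin (x + d) * Complex.sin (y + d)) := by
    rw [hzd, Complex.cos_pi_sub, Complex.cos_add]
  rw [Matrix.det_fin_three]
  norm_num [Matrix.cons_val_zero, Matrix.cons_val_one, Matrix.head_cons, Matrix.cons_val_two, Matrix.tail_cons]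
  rw [deriv_aux d x hx, deriv_aux d y hy, deriv_aux d z hz]
  rw [hsz] at hz
  rw [hsz, hcz]
  have pa := Complex.sin_sq_add_cos_sq (x + d)
  have pb := Complex.sin_sq_add_cos_sq (y + d)
  set sa := Complex.sin (x + d)
  set ca := Complex.cos (x + d)
  set sb := Complex.sin (y + d)
  set cb := Complex.cos (y + d)
  clear_value sa ca sb cb
  clear hsz hcz hzd hd h3 hxyz
  simp only [mul_div_assoc', div_div]
  have hD : sa ^ 3 * sb ^ 3 * (sa * cb + ca * sb) ^ 3 ≠ 0 :=
    mul_ne_zero (mul_ne_zero (pow_ne_zero 3 hx) (pow_ne_zero 3 hy)) (pow_ne_zero 3 hz)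
  have hd1 : sb ^ 2 * (sa * cb + ca * sb) ^ 3 ≠ 0 :=
    mul_ne_zero (pow_ne_zero 2 hy) (pow_ne_zero 3 hz)
  have hd2 : (sa * cb + ca * sb) ^ 2 * sb ^ 3 ≠ 0 :=
    mul_ne_zero (pow_ne_zero 2 hz) (pow_ne_zero 3 hy)
  have hd3 : sa ^ 2 * (sa * cb + ca * sb) ^ 3 ≠ 0 :=
    mul_ne_zero (pow_ne_zero 2 hx) (pow_ne_zero 3 hz)
  have hd4 : (sa * cb + ca * sb) ^ 2 * sa ^ 3 ≠ 0 :=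
    mul_ne_zero (pow_ne_zero 2 hz) (pow_ne_zero 3 hx)
  have hd5 : sa ^ 2 * sb ^ 3 ≠ 0 :=
    mul_ne_zero (pow_ne_zero 2 hx) (pow_ne_zero 3 hy)
  have hd6 : sb ^ 2 * sa ^ 3 ≠ 0 :=
    mul_ne_zero (pow_ne_zero 2 hy) (pow_ne_zero 3 hx)
  have e1 : (sb ^ 2)⁻¹ * (-2 * -(ca * cb - sa * sb)) / (sa * cb + ca * sb) ^ 3
      = -2 * -(ca * cb - sa * sb) * (sa ^ 3 * sb)
          / (sa ^ 3 * sb ^ 3 * (sa * cb + ca * sb) ^ 3) := by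
    rw [inv_mul_eq_div, div_div, div_eq_div_iff hd1 hD]; ring
  have e2 : ((sa * cb + ca * sb) ^ 2)⁻¹ * (-2 * cb) / sb ^ 3
      = -2 * cb * (sa ^ 3 * (sa * cb + ca * sb))
          / (sa ^ 3 * sb ^ 3 * (sa * cb + ca * sb) ^ 3) := by
    rw [inv_mul_eq_div, div_div, div_eq_div_iff hd2 hD]; ring
  have e3 : (sa ^ 2)⁻¹ * (-2 * -(ca * cb - sa * sb)) / (sa * cb + ca * sb) ^ 3
      = -2 * -(ca * cb - sa * sb) * (sa * sb ^ 3)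
          / (sa ^ 3 * sb ^ 3 * (sa * cb + ca * sb) ^ 3) := by
    rw [inv_mul_eq_div, div_div, div_eq_div_iff hd3 hD]; ring
  have e4 : ((sa * cb + ca * sb) ^ 2)⁻¹ * (-2 * ca) / sa ^ 3
      = -2 * ca * (sb ^ 3 * (sa * cb + ca * sb))
          / (sa ^ 3 * sb ^ 3 * (sa * cb + ca * sb) ^ 3) := by
    rw [inv_mul_eq_div, div_div, div_eq_div_iff hd4 hD]; ring
  have e5 : (sa ^ 2)⁻¹ * (-2 * cb) / sb ^ 3
      = -2 * cb * (sa * (sa * cb + ca * sb) ^ 3)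
          / (sa ^ 3 * sb ^ 3 * (sa * cb + ca * sb) ^ 3) := by
    rw [inv_mul_eq_div, div_div, div_eq_div_iff hd5 hD]; ring
  have e6 : (sb ^ 2)⁻¹ * (-2 * ca) / sa ^ 3
      = -2 * ca * (sb * (sa * cb + ca * sb) ^ 3)
          / (sa ^ 3 * sb ^ 3 * (sa * cb + ca * sb) ^ 3) := by
    rw [inv_mul_eq_div, div_div, div_eq_div_iff hd6 hD]; ring
  rw [e1, e2, e3, e4, e5, e6, div_sub_div_same, div_sub_div_same, ← add_div,
    ← add_div, div_sub_div_same, div_eq_zero_iff]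
  left
  linear_combination
    (2*cb^2 - 2*cb^4 - 2*sb^2 + 2*sb^4 - 2*ca^2*cb^2 + 2*ca^2*cb^4 + 2*ca^2*sb^2
      + 4*sa*ca*sb*cb - 4*sa*ca*sb*cb^3 + 2*sa^2*cb^2 - 2*sa^2*cb^4 - 2*sa^2*sb^2) * pa
    + (-2*cb^2 + 2*sb^2 + 4*ca^2*cb^2 - 4*ca^2*sb^2 - 2*ca^4*cb^2 + 2*ca^4*sb^2
      - 4*sa*ca*sb*cb + 4*sa*ca^3*sb*cb) * pb
end

section
/- Fix n ≥ 2 and c ∈ ℝ, and let F(x) = c + 1/sinh²(x). For all pairwise distinct real numbers x₁, …, xₙ, one has Σ_{j=1}^n Σ_{k≠j} F'(x_j - x_k) Π_{l≠j,l≠k} F(x_j - x_l) = 0. -/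
open Finset Polynomial

namespace Stmt5

/-- Product rule for `Finset` products of polynomials. -/
theorem derivative_finset_prod {ι : Type*} [DecidableEq ι] (s : Finset ι) (f : ι → ℝ[X]) :
    derivative (∏ i ∈ s, f i) = ∑ i ∈ s, (∏ j ∈ s.erase i, f j) * derivative (f i) := by
  induction s using Finset.induction_on with
  | empty => simp
  | @insert a s ha ih =>
    rw [Finset.prod_insert ha, derivative_mul, ih, Finset.sum_insert ha,
      Finset.erase_insert ha, Finset.mul_sum]
    have hsum : ∑ i ∈ s, (∏ j ∈ (insert a s).erase i, f j) * derivative (f i)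
        = ∑ i ∈ s, f a * ((∏ j ∈ s.erase i, f j) * derivative (f i)) :=
      Finset.sum_congr rfl fun i hi => by
        rw [Finset.erase_insert_of_ne (by rintro rfl; exact ha hi),
          Finset.prod_insert (fun h => ha (Finset.mem_of_mem_erase h))]; ring
    rw [hsum, mul_comm (derivative (f a)) (∏ i ∈ s, f i)]

/-- Double root gives divisibility by the square. -/
theorem sq_dvd_of_double_root (p : ℝ[X]) (a : ℝ) (h1 : p.eval a = 0)
    (h2 : (derivative p).eval a = 0) : (X - C a) ^ 2 ∣ p := by
  obtain ⟨q, hq⟩ := dvd_iff_isRoot.2 h1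
  have hq' : q.eval a = 0 := by
    have := h2
    rw [hq, derivative_mul, derivative_X_sub_C] at this
    simpa using this
  obtain ⟨r, hr⟩ := dvd_iff_isRoot.2 hq'
  exact ⟨r, by rw [hq, hr]; ring⟩

noncomputable def Bp (c w : ℝ) : ℝ[X] := C c * X ^ 2 + C ((4 - 2 * c) * w) * X + C (c * w ^ 2)

theorem Bp_eval (c w u : ℝ) : (Bp c w).eval u = c * u ^ 2 + (4 - 2 * c) * w * u + c * w ^ 2 := by
  simp [Bp]

theorem Bp_deriv (c w : ℝ) : derivative (Bp c w) = C (2 * c) * X + C ((4 - 2 * c) * w) := by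
  simp [Bp, derivative_pow]
  ring

theorem Bp_natDegree_le (c w : ℝ) : (Bp c w).natDegree ≤ 2 := by
  refine (natDegree_add_le _ _).trans (max_le ((natDegree_add_le _ _).trans (max_le ?_ ?_)) ?_)
  · exact (natDegree_C_mul_le _ _).trans (by simp)
  · exact (natDegree_C_mul_le _ _).trans (by simp)
  · exact le_trans (le_of_eq (natDegree_C _)) (by omega)

theorem Bp_coeff_two (c w : ℝ) : (Bp c w).coeff 2 = c := by
  have h2 : ((C w : ℝ[X]) ^ 2).coeff 2 = 0 := by rw [← C_pow, coeff_C]; simp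
  simp [Bp, coeff_X, coeff_C, h2]


variable {n : ℕ}

noncomputable def hp (z : Fin n → ℝ) (j : Fin n) : ℝ[X] := ∏ l ∈ univ.erase j, (X - C (z l))
noncomputable def Pp (z : Fin n → ℝ) : ℝ[X] := ∏ l, (X - C (z l))
noncomputable def Mp (c : ℝ) (z : Fin n → ℝ) (j : Fin n) : ℝ[X] := ∏ l ∈ univ.erase j, Bp c (z l)
noncomputable def Np (c : ℝ) (z : Fin n → ℝ) : ℝ[X] := ∏ l, Bp c (z l)
def gv (z : Fin n → ℝ) (j : Fin n) : ℝ := ∏ l ∈ univ.erase j, (z j - z l)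
def cv (z : Fin n → ℝ) (j : Fin n) : ℝ :=
  ∑ k ∈ univ.erase j, ∏ l ∈ (univ.erase j).erase k, (z j - z l)
noncomputable def bv (c : ℝ) (z : Fin n → ℝ) (j : Fin n) : ℝ :=
  4 * z j * (Mp c z j).eval (z j) / gv z j ^ 2
noncomputable def av (c : ℝ) (z : Fin n → ℝ) (j : Fin n) : ℝ :=
  4 * z j * ((derivative (Mp c z j)).eval (z j) * gv z j
    - 2 * (Mp c z j).eval (z j) * cv z j) / gv z j ^ 3
noncomputable def Rp (c : ℝ) (z : Fin n → ℝ) : ℝ[X] :=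
  C (c ^ n) * Pp z ^ 2
    + ∑ j, (C (av c z j) * (X * (X - C (z j)) * hp z j ^ 2) + C (bv c z j) * (X * hp z j ^ 2))

theorem sub_ne {z : Fin n → ℝ} (hz : Function.Injective z) {j k : Fin n}
    (h : k ∈ univ.erase j) : z j - z k ≠ 0 :=
  sub_ne_zero.2 fun he => (Finset.mem_erase.1 h).1 (hz he).symm

theorem gv_ne {z : Fin n → ℝ} (hz : Function.Injective z) (j : Fin n) : gv z j ≠ 0 :=
  Finset.prod_ne_zero_iff.2 fun _ hk => sub_ne hz hk

theorem hp_eval_self (z : Fin n → ℝ) (j : Fin n) : (hp z j).eval (z j) = gv z j := by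
  simp [hp, gv, eval_prod]

theorem hp_eval_ne (z : Fin n → ℝ) {i j : Fin n} (hij : i ≠ j) : (hp z j).eval (z i) = 0 := by
  rw [hp, eval_prod]
  exact Finset.prod_eq_zero (Finset.mem_erase.2 ⟨hij, Finset.mem_univ i⟩) (by simp)

theorem hp_monic (z : Fin n → ℝ) (j : Fin n) : (hp z j).Monic :=
  monic_prod_of_monic _ _ fun l _ => monic_X_sub_C _

theorem hp_natDegree (z : Fin n → ℝ) (j : Fin n) : (hp z j).natDegree = n - 1 := by
  rw [hp, natDegree_prod_of_monic _ _ fun l _ => monic_X_sub_C _]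
  simp [Finset.card_erase_of_mem]

theorem hp_deriv_eval (z : Fin n → ℝ) (j : Fin n) :
    (derivative (hp z j)).eval (z j) = cv z j := by
  rw [hp, derivative_finset_prod]
  simp [eval_finset_sum, eval_prod, cv]

theorem Pp_eq (z : Fin n → ℝ) (j : Fin n) : Pp z = (X - C (z j)) * hp z j := by
  rw [Pp, hp, ← Finset.mul_prod_erase _ _ (Finset.mem_univ j)]

theorem Pp_eval (z : Fin n → ℝ) (j : Fin n) : (Pp z).eval (z j) = 0 := by
  rw [Pp_eq z j]; simp

theorem Pp_monic (z : Fin n → ℝ) : (Pp z).Monic :=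
  monic_prod_of_monic _ _ fun l _ => monic_X_sub_C _

theorem Pp_natDegree (z : Fin n → ℝ) : (Pp z).natDegree = n := by
  rw [Pp, natDegree_prod_of_monic _ _ fun l _ => monic_X_sub_C _]; simp

theorem Np_eq (c : ℝ) (z : Fin n → ℝ) (j : Fin n) : Np c z = Bp c (z j) * Mp c z j := by
  rw [Np, Mp, ← Finset.mul_prod_erase _ _ (Finset.mem_univ j)]

theorem Np_eval (c : ℝ) (z : Fin n → ℝ) (j : Fin n) :
    (Np c z).eval (z j) = 4 * z j ^ 2 * (Mp c z j).eval (z j) := by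
  rw [Np_eq c z j, eval_mul, Bp_eval]; ring_nf

theorem Np_deriv_eval (c : ℝ) (z : Fin n → ℝ) (j : Fin n) :
    (derivative (Np c z)).eval (z j)
      = 4 * z j * (Mp c z j).eval (z j) + 4 * z j ^ 2 * (derivative (Mp c z j)).eval (z j) := by
  rw [Np_eq c z j, derivative_mul, eval_add, eval_mul, eval_mul, Bp_deriv, Bp_eval]
  simp only [eval_add, eval_mul, eval_C, eval_X]
  ring

theorem Np_eval_zero (c : ℝ) (z : Fin n → ℝ) : (Np c z).eval 0 = c ^ n * ∏ l, z l ^ 2 := by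
  rw [Np, eval_prod]
  rw [Finset.prod_congr rfl (fun l (_ : l ∈ univ) => by rw [Bp_eval]; ring :
    ∀ l ∈ univ, (Bp c (z l)).eval 0 = c * z l ^ 2)]
  rw [Finset.prod_mul_distrib, Finset.prod_const, Finset.card_univ, Fintype.card_fin]

theorem Rp_eval_zero (c : ℝ) (z : Fin n → ℝ) : (Rp c z).eval 0 = c ^ n * ∏ l, z l ^ 2 := by
  rw [Rp, eval_add, eval_mul, eval_C, eval_pow]
  have hP : (Pp z).eval 0 ^ 2 = ∏ l, z l ^ 2 := by
    rw [Pp, eval_prod, ← Finset.prod_pow]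
    exact Finset.prod_congr rfl fun l _ => by rw [eval_sub, eval_X, eval_C]; ring
  rw [hP, eval_finset_sum]
  simp

theorem delta_eval_zero (c : ℝ) (z : Fin n → ℝ) : (Np c z - Rp c z).eval 0 = 0 := by
  rw [eval_sub, Np_eval_zero, Rp_eval_zero, sub_self]

theorem delta_eval_root (c : ℝ) {z : Fin n → ℝ} (hz : Function.Injective z) (j : Fin n) :
    (Np c z - Rp c z).eval (z j) = 0 := by
  rw [eval_sub, Np_eval, Rp, eval_add, eval_mul, eval_C, eval_pow, Pp_eval, eval_finset_sum]
  have hs : ∑ i, ((C (av c z i) * (X * (X - C (z i)) * hp z i ^ 2)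
        + C (bv c z i) * (X * hp z i ^ 2)).eval (z j))
      = bv c z j * (z j * gv z j ^ 2) := by
    rw [Finset.sum_eq_single j]
    · simp [eval_mul, eval_pow, hp_eval_self]
    · intro i _ hij
      simp [eval_mul, eval_pow, hp_eval_ne z (Ne.symm hij)]
    · intro h; exact absurd (Finset.mem_univ j) h
  rw [hs, bv]
  field_simp [gv_ne hz j]
  ring

theorem delta_deriv_root (c : ℝ) {z : Fin n → ℝ} (hz : Function.Injective z) (j : Fin n) :
    (derivative (Np c z - Rp c z)).eval (z j) = 0 := by
  have e1 : ∀ (a : ℝ) (r : ℝ[X]), (derivative (C a * r)).eval (z j)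
      = a * (derivative r).eval (z j) := by
    intro a r; rw [derivative_mul, derivative_C]; simp
  have hzero : ∀ (s : ℝ[X]) (i : Fin n), j ≠ i →
      (derivative (s * hp z i ^ 2)).eval (z j) = 0 := by
    intro s i hij
    rw [derivative_mul, derivative_sq]
    simp [eval_mul, eval_pow, hp_eval_ne z hij]
  rw [derivative_sub, eval_sub, Np_deriv_eval, Rp, derivative_add, eval_add]
  have p1 : (derivative (C (c ^ n) * Pp z ^ 2)).eval (z j) = 0 := by
    rw [derivative_C_mul, derivative_sq]
    simp [eval_mul, Pp_eval]
  rw [p1, derivative_sum, eval_finset_sum]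
  have hs : ∑ i, ((derivative (C (av c z i) * (X * (X - C (z i)) * hp z i ^ 2)
        + C (bv c z i) * (X * hp z i ^ 2))).eval (z j))
      = av c z j * (z j * gv z j ^ 2)
        + bv c z j * (gv z j ^ 2 + z j * (2 * gv z j * cv z j)) := by
    rw [Finset.sum_eq_single j]
    · rw [derivative_add, eval_add, e1, e1]
      congr 1
      · rw [derivative_mul, derivative_sq, derivative_mul, derivative_X, derivative_X_sub_C]
        simp [eval_mul, eval_pow, eval_add, hp_eval_self, hp_deriv_eval]
      · rw [derivative_mul, derivative_sq, derivative_X]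
        simp [eval_mul, eval_pow, eval_add, hp_eval_self, hp_deriv_eval]
    · intro i _ hij
      rw [derivative_add, eval_add, e1, e1, hzero _ _ (Ne.symm hij), hzero _ _ (Ne.symm hij)]
      simp
    · intro h; exact absurd (Finset.mem_univ j) h
  rw [hs, av, bv]
  field_simp [gv_ne hz j]
  ring

theorem Np_natDegree_le (c : ℝ) (z : Fin n → ℝ) : (Np c z).natDegree ≤ 2 * n := by
  refine (natDegree_prod_le _ _).trans ?_
  calc ∑ l : Fin n, (Bp c (z l)).natDegree ≤ ∑ _l : Fin n, 2 :=
        Finset.sum_le_sum fun l _ => Bp_natDegree_le c (z l)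
    _ = 2 * n := by simp [mul_comm]

theorem term_natDegree (z : Fin n → ℝ) (j : Fin n) :
    (X * (X - C (z j)) * hp z j ^ 2).natDegree = 2 + 2 * (n - 1) := by
  rw [(((monic_X).mul (monic_X_sub_C (z j))).natDegree_mul ((hp_monic z j).pow 2)),
    (monic_X).natDegree_mul (monic_X_sub_C (z j)), (hp_monic z j).natDegree_pow,
    natDegree_X, natDegree_X_sub_C, hp_natDegree]

theorem term2_natDegree (z : Fin n → ℝ) (j : Fin n) :
    (X * hp z j ^ 2).natDegree = 1 + 2 * (n - 1) := by
  rw [(monic_X).natDegree_mul ((hp_monic z j).pow 2), (hp_monic z j).natDegree_pow,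
    natDegree_X, hp_natDegree]

theorem Rp_natDegree_le (c : ℝ) (z : Fin n → ℝ) : (Rp c z).natDegree ≤ 2 * n := by
  refine (natDegree_add_le _ _).trans (max_le ?_ ?_)
  · refine (natDegree_C_mul_le _ _).trans ?_
    rw [(Pp_monic z).natDegree_pow, Pp_natDegree]
  · refine natDegree_sum_le_of_forall_le _ _ fun j _ => ?_
    have hn1 : 1 ≤ n := j.pos
    refine (natDegree_add_le _ _).trans (max_le ?_ ?_)
    · refine (natDegree_C_mul_le _ _).trans ?_
      rw [term_natDegree]; omega
    · refine (natDegree_C_mul_le _ _).trans ?_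
      rw [term2_natDegree]; omega

theorem key_eq (c : ℝ) {z : Fin n → ℝ} (hz : Function.Injective z) (h0 : ∀ i, z i ≠ 0) :
    Np c z = Rp c z := by
  have hQmonic : (∏ l, (X - C (z l)) ^ 2 : ℝ[X]).Monic :=
    monic_prod_of_monic _ _ fun l _ => (monic_X_sub_C _).pow 2
  have hQdeg : (∏ l, (X - C (z l)) ^ 2 : ℝ[X]).natDegree = 2 * n := by
    rw [natDegree_prod_of_monic _ _ fun l _ => (monic_X_sub_C _).pow 2]
    have : ∀ l ∈ (univ : Finset (Fin n)), ((X - C (z l)) ^ 2 : ℝ[X]).natDegree = 2 := by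
      intro l _; rw [(monic_X_sub_C _).natDegree_pow, natDegree_X_sub_C]
    rw [Finset.sum_congr rfl this]
    simp [mul_comm]
  have hdvd : (X * ∏ l, (X - C (z l)) ^ 2 : ℝ[X]) ∣ Np c z - Rp c z := by
    have hmemdvd : ∀ j, ((X - C (z j)) ^ 2 : ℝ[X]) ∣ Np c z - Rp c z := fun j =>
      sq_dvd_of_double_root _ _ (delta_eval_root c hz j) (delta_deriv_root c hz j)
    have hQdvd : (∏ l, (X - C (z l)) ^ 2 : ℝ[X]) ∣ Np c z - Rp c z := by
      refine Finset.prod_dvd_of_coprime ?_ fun j _ => hmemdvd j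
      intro i _ j _ hij
      exact (pairwise_coprime_X_sub_C hz hij).pow
    have hXdvd : (X : ℝ[X]) ∣ Np c z - Rp c z := by
      rw [X_dvd_iff, coeff_zero_eq_eval_zero]
      exact delta_eval_zero c z
    have hcop : IsCoprime (X : ℝ[X]) (∏ l, (X - C (z l)) ^ 2) := by
      refine IsCoprime.prod_right fun l _ => IsCoprime.pow_right ?_
      refine ⟨C (z l)⁻¹, -C (z l)⁻¹, ?_⟩
      have h1 : (C (z l)⁻¹ : ℝ[X]) * X + -C (z l)⁻¹ * (X - C (z l)) = C (z l)⁻¹ * C (z l) := by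
        ring
      rw [h1, ← C_mul, inv_mul_cancel₀ (h0 l), C_1]
    exact hcop.mul_dvd hXdvd hQdvd
  by_contra hne
  have hne' : Np c z - Rp c z ≠ 0 := sub_ne_zero.2 hne
  have hle := natDegree_le_of_dvd hdvd hne'
  have hXQ : (X * ∏ l, (X - C (z l)) ^ 2 : ℝ[X]).natDegree = 1 + 2 * n := by
    rw [(monic_X).natDegree_mul hQmonic, natDegree_X, hQdeg]
  have hDle : (Np c z - Rp c z).natDegree ≤ 2 * n :=
    (natDegree_sub_le _ _).trans (max_le (Np_natDegree_le c z) (Rp_natDegree_le c z))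
  omega

theorem sum_av (hn : 1 ≤ n) (c : ℝ) {z : Fin n → ℝ} (hz : Function.Injective z)
    (h0 : ∀ i, z i ≠ 0) : ∑ j, av c z j = 0 := by
  have hkey := congrArg (fun p : ℝ[X] => p.coeff (2 * n)) (key_eq c hz h0)
  have hN : (Np c z).coeff (2 * n) = c ^ n := by
    have := coeff_prod_of_natDegree_le (s := (univ : Finset (Fin n)))
      (fun l => Bp c (z l)) 2 (fun p _ => Bp_natDegree_le c (z p))
    rw [Finset.card_univ, Fintype.card_fin] at this
    rw [Np, show 2 * n = n * 2 by ring, this]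
    simp [Bp_coeff_two]
  have hR : (Rp c z).coeff (2 * n) = c ^ n + ∑ j, av c z j := by
    rw [Rp, coeff_add, coeff_C_mul]
    have hP2 : ((Pp z) ^ 2).coeff (2 * n) = 1 := by
      have hd : ((Pp z) ^ 2).natDegree = 2 * n := by
        rw [(Pp_monic z).natDegree_pow, Pp_natDegree]
      rw [← hd]
      exact ((Pp_monic z).pow 2).coeff_natDegree
    rw [hP2, mul_one, finset_sum_coeff]
    congr 1
    refine Finset.sum_congr rfl fun j _ => ?_
    have hn1 : 1 ≤ n := j.pos
    rw [coeff_add, coeff_C_mul, coeff_C_mul]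
    have h1 : (X * (X - C (z j)) * hp z j ^ 2).coeff (2 * n) = 1 := by
      have hd := term_natDegree z j
      have hd' : (X * (X - C (z j)) * hp z j ^ 2).natDegree = 2 * n := by omega
      rw [← hd']
      exact (((monic_X).mul (monic_X_sub_C (z j))).mul ((hp_monic z j).pow 2)).coeff_natDegree
    have h2 : (X * hp z j ^ 2).coeff (2 * n) = 0 := by
      refine coeff_eq_zero_of_natDegree_lt ?_
      rw [term2_natDegree]; omega
    rw [h1, h2, mul_one, mul_zero, add_zero]
  rw [hN, hR] at hkey
  linarith

theorem inner_eq (c : ℝ) {z : Fin n → ℝ} (hz : Function.Injective z) (j : Fin n) :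
    ∑ k ∈ univ.erase j, (-8 * z j * z k * (z j + z k) / (z j - z k) ^ 3) *
      ∏ l ∈ (univ.erase j).erase k, (c + 4 * z j * z l / (z j - z l) ^ 2)
    = av c z j / 2 := by
  have hMev : (Mp c z j).eval (z j) = ∏ l ∈ univ.erase j, (Bp c (z l)).eval (z j) := by
    rw [Mp, eval_prod]
  have hMder : (derivative (Mp c z j)).eval (z j) = ∑ k ∈ univ.erase j,
      (∏ l ∈ (univ.erase j).erase k, (Bp c (z l)).eval (z j))
        * (2 * c * z j + (4 - 2 * c) * z k) := by
    rw [Mp, derivative_finset_prod, eval_finset_sum]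
    refine Finset.sum_congr rfl fun k _ => ?_
    rw [eval_mul, eval_prod, Bp_deriv]
    simp only [eval_add, eval_mul, eval_C, eval_X]
  have hav : av c z j = ∑ k ∈ univ.erase j,
      4 * z j * ((∏ l ∈ (univ.erase j).erase k, (Bp c (z l)).eval (z j))
          * (2 * c * z j + (4 - 2 * c) * z k) * gv z j
        - 2 * (∏ l ∈ univ.erase j, (Bp c (z l)).eval (z j))
          * ∏ l ∈ (univ.erase j).erase k, (z j - z l)) / gv z j ^ 3 := by
    rw [av, hMder, hMev, cv, Finset.sum_mul, Finset.mul_sum, ← Finset.sum_sub_distrib,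
      Finset.mul_sum, Finset.sum_div]
  rw [hav, Finset.sum_div]
  refine Finset.sum_congr rfl fun k hk => ?_
  have hd : z j - z k ≠ 0 := sub_ne hz hk
  have hE : (∏ l ∈ (univ.erase j).erase k, (z j - z l)) ≠ 0 :=
    Finset.prod_ne_zero_iff.2 fun l hl => sub_ne hz (Finset.mem_of_mem_erase hl)
  have hgv : gv z j = (z j - z k) * ∏ l ∈ (univ.erase j).erase k, (z j - z l) :=
    (Finset.mul_prod_erase _ _ hk).symm
  have hMsplit : ∏ l ∈ univ.erase j, (Bp c (z l)).eval (z j)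
      = (Bp c (z k)).eval (z j) * ∏ l ∈ (univ.erase j).erase k, (Bp c (z l)).eval (z j) :=
    (Finset.mul_prod_erase _ _ hk).symm
  have hprod : ∏ l ∈ (univ.erase j).erase k, (c + 4 * z j * z l / (z j - z l) ^ 2)
      = (∏ l ∈ (univ.erase j).erase k, (Bp c (z l)).eval (z j))
        / (∏ l ∈ (univ.erase j).erase k, (z j - z l)) ^ 2 := by
    rw [← Finset.prod_pow, ← Finset.prod_div_distrib]
    refine Finset.prod_congr rfl fun l hl => ?_
    have hdl : z j - z l ≠ 0 := sub_ne hz (Finset.mem_of_mem_erase hl)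
    rw [Bp_eval]
    field_simp
    ring
  rw [hprod, hgv, hMsplit, Bp_eval]
  field_simp
  ring

theorem alg_sum (c : ℝ) {z : Fin n → ℝ} (hz : Function.Injective z)
    (h0 : ∀ i, z i ≠ 0) (hn : 1 ≤ n) :
    ∑ j, ∑ k ∈ univ.erase j, (-8 * z j * z k * (z j + z k) / (z j - z k) ^ 3) *
      ∏ l ∈ (univ.erase j).erase k, (c + 4 * z j * z l / (z j - z l) ^ 2) = 0 := by
  rw [Finset.sum_congr rfl fun j _ => inner_eq c hz j, ← Finset.sum_div,
    sum_av hn c hz h0, zero_div]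

theorem deriv_formula (c : ℝ) {u : ℝ} (hu : u ≠ 0) :
    deriv (fun t => c + 1 / Real.sinh t ^ 2) u
      = -(2 * Real.sinh u * Real.cosh u) / (Real.sinh u ^ 2) ^ 2 := by
  have hs : Real.sinh u ≠ 0 := Real.sinh_ne_zero.2 hu
  have h1 : HasDerivAt (fun t : ℝ => Real.sinh t ^ 2) (2 * Real.sinh u * Real.cosh u) u := by
    simpa using (Real.hasDerivAt_sinh u).fun_pow 2
  have h2 := (h1.fun_inv (pow_ne_zero 2 hs)).const_add c
  have h4 : (fun t : ℝ => c + (Real.sinh t ^ 2)⁻¹) = fun t => c + 1 / Real.sinh t ^ 2 := by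
    funext t; rw [one_div]
  rw [h4] at h2
  rw [h2.deriv]

theorem sinh_exp (a b : ℝ) : Real.sinh (a - b)
    = (Real.exp a ^ 2 - Real.exp b ^ 2) / (2 * (Real.exp a * Real.exp b)) := by
  rw [Real.sinh_eq, Real.exp_sub, Real.exp_neg, Real.exp_sub]
  rw [div_eq_div_iff (by positivity) (by positivity)]
  field_simp

theorem cosh_exp (a b : ℝ) : Real.cosh (a - b)
    = (Real.exp a ^ 2 + Real.exp b ^ 2) / (2 * (Real.exp a * Real.exp b)) := by
  rw [Real.cosh_eq, Real.exp_sub, Real.exp_neg, Real.exp_sub]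
  rw [div_eq_div_iff (by positivity) (by positivity)]
  field_simp

end Stmt5

/-- `F(x) = c + 1/sinh²(x)` satisfies
`∑ⱼ ∑_{k≠j} F'(xⱼ−x_k) ∏_{l≠j,k} F(xⱼ−x_l) = 0`
for every `n ≥ 2` and all pairwise distinct real `x₁, …, xₙ`. -/
theorem stmt_5 (n : ℕ) (hn : 2 ≤ n) (c : ℝ) (x : Fin n → ℝ)
    (hx : Function.Injective x) :
    ∑ j : Fin n, ∑ k ∈ univ.erase j,
      deriv (fun t => c + 1 / Real.sinh t ^ 2) (x j - x k) *
        ∏ l ∈ (univ.erase j).erase k, (c + 1 / Real.sinh (x j - x l) ^ 2) = 0 := by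
  have hzinj : Function.Injective (fun i => Real.exp (x i) ^ 2) := by
    intro i j h
    simp only at h
    have he : Real.exp (x i) = Real.exp (x j) := by
      nlinarith [Real.exp_pos (x i), Real.exp_pos (x j)]
    exact hx (Real.exp_injective he)
  have h0 : ∀ i, (fun i => Real.exp (x i) ^ 2) i ≠ 0 := fun i => by positivity
  calc ∑ j : Fin n, ∑ k ∈ univ.erase j,
      deriv (fun t => c + 1 / Real.sinh t ^ 2) (x j - x k) *
        ∏ l ∈ (univ.erase j).erase k, (c + 1 / Real.sinh (x j - x l) ^ 2)
      = ∑ j : Fin n, ∑ k ∈ univ.erase j,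
        (-8 * Real.exp (x j) ^ 2 * Real.exp (x k) ^ 2
            * (Real.exp (x j) ^ 2 + Real.exp (x k) ^ 2)
          / (Real.exp (x j) ^ 2 - Real.exp (x k) ^ 2) ^ 3) *
        ∏ l ∈ (univ.erase j).erase k,
          (c + 4 * Real.exp (x j) ^ 2 * Real.exp (x l) ^ 2
            / (Real.exp (x j) ^ 2 - Real.exp (x l) ^ 2) ^ 2) := by
        refine Finset.sum_congr rfl fun j _ => Finset.sum_congr rfl fun k hk => ?_
        have hxjk : x j - x k ≠ 0 :=
          sub_ne_zero.2 fun h => (Finset.mem_erase.1 hk).1 (hx h).symm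
        have hzjk : Real.exp (x j) ^ 2 - Real.exp (x k) ^ 2 ≠ 0 := by
          have := Stmt5.sub_ne (z := fun i => Real.exp (x i) ^ 2) hzinj hk
          simpa using this
        congr 1
        · rw [Stmt5.deriv_formula c hxjk, Stmt5.sinh_exp, Stmt5.cosh_exp]
          field_simp
          ring
        · refine Finset.prod_congr rfl fun l hl => ?_
          have hzjl : Real.exp (x j) ^ 2 - Real.exp (x l) ^ 2 ≠ 0 := by
            have := Stmt5.sub_ne (z := fun i => Real.exp (x i) ^ 2) hzinj (Finset.mem_of_mem_erase hl)
            simpa using this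
          rw [Stmt5.sinh_exp]
          congr 1
          rw [one_div, div_pow, inv_div]
          rw [div_eq_div_iff (by positivity) (by positivity)]
          ring
    _ = 0 := Stmt5.alg_sum c hzinj h0 (by omega)
end

section
/- Fix n ≥ 2 and c ∈ ℝ, and let F(x) = c + 1/x². For all pairwise distinct real numbers x₁, …, xₙ, one has Σ_{j=1}^n Σ_{k≠j} F'(x_j - x_k) Π_{l≠j,l≠k} F(x_j - x_l) = 0. -/
open Finset Polynomial Lagrange


lemma derivF (c : ℝ) {z : ℝ} (hz : z ≠ 0) :
    deriv (fun t : ℝ => c + 1 / t ^ 2) z = -2 / z ^ 3 := by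
  have h1 : HasDerivAt (fun t : ℝ => t ^ 2) (2 * z ^ 1) z := hasDerivAt_pow 2 z
  have h2 := h1.inv (pow_ne_zero 2 hz)
  have h3 := h2.const_add c
  have he : -(2 * z ^ 1) / (z ^ 2) ^ 2 = -2 / z ^ 3 := by
    field_simp
  rw [he] at h3
  have : (fun t : ℝ => c + (t ^ 2)⁻¹) = fun t : ℝ => c + 1 / t ^ 2 := by
    funext t; rw [one_div]
  rw [← this]
  exact h3.deriv

lemma sum_antisymm {ι : Type*} [DecidableEq ι] (D : Finset ι) (f : ι → ι → ℝ)
    (hf : ∀ j k, f j k = - f k j) :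
    ∑ j ∈ D, ∑ k ∈ D.erase j, f j k = 0 := by
  have h0 : ∀ j, f j j = 0 := fun j => by have := hf j j; linarith
  have h1 : ∑ j ∈ D, ∑ k ∈ D.erase j, f j k = ∑ j ∈ D, ∑ k ∈ D, f j k :=
    sum_congr rfl fun j _ => Finset.sum_erase _ (h0 j)
  have h2 : ∑ j ∈ D, ∑ k ∈ D, f j k = - ∑ j ∈ D, ∑ k ∈ D, f j k := by
    nth_rewrite 1 [Finset.sum_comm]
    rw [← Finset.sum_neg_distrib]
    exact sum_congr rfl fun k _ => by
      rw [← Finset.sum_neg_distrib]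
      exact sum_congr rfl fun j _ => hf j k
  rw [h1]; linarith


lemma basis_eq_C_mul_nodal {F : Type*} [Field F] {ι : Type*} [DecidableEq ι]
    (s : Finset ι) (v : ι → F) (i : ι) :
    Lagrange.basis s v i = C (nodalWeight s v i) * nodal (s.erase i) v := by
  simp_rw [Lagrange.basis, basisDivisor, nodalWeight, prod_mul_distrib, map_prod, nodal]

lemma lemC {ι : Type*} [DecidableEq ι] (D : Finset ι) (y : ι → ℝ)
    (hy : Set.InjOn y D) {j : ι} (hj : j ∈ D) :
    ∑ k ∈ D.erase j, nodalWeight D y k * (y j - y k)⁻¹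
      = -(nodalWeight D y j * ∑ k ∈ D.erase j, (y j - y k)⁻¹) := by
  have hsub : ∀ k ∈ D.erase j, y j - y k ≠ 0 := by
    intro k hk
    rcases mem_erase.mp hk with ⟨hkj, hkD⟩
    exact sub_ne_zero_of_ne fun h => hkj (hy hkD hj h.symm)
  have hPne : (∏ l ∈ D.erase j, (y j - y l)) ≠ 0 := prod_ne_zero_iff.mpr hsub
  have h1 : ∑ k ∈ D, Lagrange.basis D y k = 1 := Lagrange.sum_basis hy ⟨j, hj⟩
  have h2 : ∑ k ∈ D, (nodalWeight D y k) *
      eval (y j) (derivative (nodal (D.erase k) y)) = 0 := by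
    have := congrArg (fun p => eval (y j) (derivative p)) h1
    simpa [derivative_sum, eval_finset_sum, basis_eq_C_mul_nodal, derivative_C_mul,
      derivative_one] using this
  rw [← Finset.add_sum_erase _ _ hj] at h2
  have hEj : eval (y j) (derivative (nodal (D.erase j) y))
      = ∑ m ∈ D.erase j, (∏ l ∈ D.erase j, (y j - y l)) * (y j - y m)⁻¹ := by
    rw [Lagrange.derivative_nodal, eval_finset_sum]
    refine sum_congr rfl fun m hm => ?_
    rw [eval_nodal]
    have h := Finset.mul_prod_erase (D.erase j) (fun l => y j - y l) hm
    field_simp [hsub m hm]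
    linear_combination h
  have hEk : ∀ k ∈ D.erase j, eval (y j) (derivative (nodal (D.erase k) y))
      = (∏ l ∈ D.erase j, (y j - y l)) * (y j - y k)⁻¹ := by
    intro k hk
    rcases mem_erase.mp hk with ⟨hkj, hkD⟩
    have hjk : j ∈ D.erase k := mem_erase.mpr ⟨fun h => hkj h.symm, hj⟩
    rw [eval_nodal_derivative_eval_node_eq hjk, Finset.erase_right_comm, eval_nodal]
    have h := Finset.mul_prod_erase (D.erase j) (fun l => y j - y l) hk
    field_simp [hsub k hk]
    linear_combination h
  have hs : ∑ k ∈ D.erase j, nodalWeight D y k *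
        eval (y j) (derivative (nodal (D.erase k) y))
      = ∑ k ∈ D.erase j, nodalWeight D y k *
        ((∏ l ∈ D.erase j, (y j - y l)) * (y j - y k)⁻¹) :=
    sum_congr rfl fun k hk => by rw [hEk k hk]
  rw [hEj, hs] at h2
  refine mul_right_cancel₀ hPne ?_
  calc (∑ k ∈ D.erase j, nodalWeight D y k * (y j - y k)⁻¹) * (∏ l ∈ D.erase j, (y j - y l))
      = ∑ k ∈ D.erase j, nodalWeight D y k *
          ((∏ l ∈ D.erase j, (y j - y l)) * (y j - y k)⁻¹) := by
        rw [sum_mul]; exact sum_congr rfl fun k _ => by ring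
    _ = -(nodalWeight D y j * ∑ m ∈ D.erase j,
          (∏ l ∈ D.erase j, (y j - y l)) * (y j - y m)⁻¹) := by linarith [h2]
    _ = -(nodalWeight D y j * ∑ k ∈ D.erase j, (y j - y k)⁻¹) *
          (∏ l ∈ D.erase j, (y j - y l)) := by
        rw [← Finset.mul_sum]; ring


lemma lemU {ι : Type*} [DecidableEq ι] (D : Finset ι) (y : ι → ℝ)
    (hy : Set.InjOn y D) :
    ∑ j ∈ D, ∑ k ∈ D.erase j, (-2 / (y j - y k) ^ 3) *
      ∏ l ∈ (D.erase j).erase k, (1 / (y j - y l) ^ 2) = 0 := by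
  have hsub : ∀ j ∈ D, ∀ k ∈ D.erase j, y j - y k ≠ 0 := by
    intro j hj k hk
    rcases mem_erase.mp hk with ⟨hkj, hkD⟩
    exact sub_ne_zero_of_ne fun h => hkj (hy hkD hj h.symm)
  have step : ∀ j ∈ D,
      ∑ k ∈ D.erase j, (-2 / (y j - y k) ^ 3) *
        ∏ l ∈ (D.erase j).erase k, (1 / (y j - y l) ^ 2)
      = ∑ k ∈ D.erase j, 2 * (nodalWeight D y j * nodalWeight D y k * (y j - y k)⁻¹) := by
    intro j hj
    set w : ℝ := nodalWeight D y j with hw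
    have hw2 : ∏ l ∈ D.erase j, (1 / (y j - y l) ^ 2) = w ^ 2 := by
      rw [hw, nodalWeight, ← Finset.prod_pow]
      exact prod_congr rfl fun l _ => by rw [inv_pow, one_div]
    have e1 : ∑ k ∈ D.erase j, (-2 / (y j - y k) ^ 3) *
        ∏ l ∈ (D.erase j).erase k, (1 / (y j - y l) ^ 2)
        = ∑ k ∈ D.erase j, (-2 * (y j - y k)⁻¹) * w ^ 2 := by
      refine sum_congr rfl fun k hk => ?_
      have h := Finset.mul_prod_erase (D.erase j) (fun l => 1 / (y j - y l) ^ 2) hk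
      beta_reduce at h
      rw [hw2] at h
      rw [← h]
      have hne := hsub j hj k hk
      field_simp
    have hC' : w * ∑ k ∈ D.erase j, (y j - y k)⁻¹
        = -(∑ k ∈ D.erase j, nodalWeight D y k * (y j - y k)⁻¹) := by
      have := lemC D y hy hj; linarith
    calc ∑ k ∈ D.erase j, (-2 / (y j - y k) ^ 3) *
          ∏ l ∈ (D.erase j).erase k, (1 / (y j - y l) ^ 2)
        = ∑ k ∈ D.erase j, (-2 * (y j - y k)⁻¹) * w ^ 2 := e1
      _ = (-2) * (w * (w * ∑ k ∈ D.erase j, (y j - y k)⁻¹)) := by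
          simp only [Finset.mul_sum]
          exact sum_congr rfl fun k _ => by ring
      _ = (-2) * (w * (-(∑ k ∈ D.erase j, nodalWeight D y k * (y j - y k)⁻¹))) := by
          rw [hC']
      _ = 2 * (w * ∑ k ∈ D.erase j, nodalWeight D y k * (y j - y k)⁻¹) := by
          ring
      _ = ∑ k ∈ D.erase j, 2 * (w * nodalWeight D y k * (y j - y k)⁻¹) := by
          simp only [Finset.mul_sum]
          exact sum_congr rfl fun k _ => by ring
  rw [sum_congr rfl step]
  refine sum_antisymm D
    (fun j k => 2 * (nodalWeight D y j * nodalWeight D y k * (y j - y k)⁻¹))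
    (fun j k => ?_)
  have hik : (y k - y j)⁻¹ = -(y j - y k)⁻¹ := by
    rw [← neg_sub (y j) (y k), inv_neg]
  rw [hik]; ring


/-- `F(x) = c + 1/x²` satisfies
`∑ⱼ ∑_{k≠j} F'(xⱼ−x_k) ∏_{l≠j,k} F(xⱼ−x_l) = 0`
for every `n ≥ 2` and all pairwise distinct real `x₁, …, xₙ`. -/
theorem stmt_6 (n : ℕ) (hn : 2 ≤ n) (c : ℝ) (x : Fin n → ℝ)
    (hx : Function.Injective x) :
    ∑ j : Fin n, ∑ k ∈ univ.erase j,
      deriv (fun t => c + 1 / t ^ 2) (x j - x k) *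
        ∏ l ∈ (univ.erase j).erase k, (c + 1 / (x j - x l) ^ 2) = 0 := by
  classical
  have hne : ∀ j k : Fin n, k ≠ j → x j - x k ≠ 0 :=
    fun j k h => sub_ne_zero_of_ne fun e => h (hx e.symm)
  have h1 : ∑ j : Fin n, ∑ k ∈ univ.erase j,
      deriv (fun t => c + 1 / t ^ 2) (x j - x k) *
        ∏ l ∈ (univ.erase j).erase k, (c + 1 / (x j - x l) ^ 2)
      = ∑ j : Fin n, ∑ k ∈ univ.erase j,
          ∑ A ∈ ((univ.erase j).erase k).powerset,
            (-2 / (x j - x k) ^ 3) *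
              ((∏ l ∈ A, (1 / (x j - x l) ^ 2)) * c ^ (n - (A.card + 2))) := by
    refine sum_congr rfl fun j _ => sum_congr rfl fun k hk => ?_
    have hkj : k ≠ j := (mem_erase.mp hk).1
    rw [derivF c (hne j k hkj)]
    have hcard : ((univ.erase j).erase k).card = n - 2 := by
      rw [card_erase_of_mem (mem_erase.mpr ⟨hkj, mem_univ k⟩), card_erase_of_mem (mem_univ j),
        card_univ, Fintype.card_fin]
      omega
    have hexp : ∏ l ∈ (univ.erase j).erase k, (c + 1 / (x j - x l) ^ 2)
        = ∑ A ∈ ((univ.erase j).erase k).powerset,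
            (∏ l ∈ A, (1 / (x j - x l) ^ 2)) * c ^ (n - (A.card + 2)) := by
      rw [prod_congr rfl fun l _ => add_comm c (1 / (x j - x l) ^ 2), Finset.prod_add]
      refine sum_congr rfl fun A hA => ?_
      rw [Finset.prod_const]
      have hsub := mem_powerset.mp hA
      have hce : ((univ.erase j).erase k \ A).card = n - (A.card + 2) := by
        rw [card_sdiff_of_subset hsub, hcard]
        omega
      rw [hce]
    rw [hexp, Finset.mul_sum]
  rw [h1]
  have h2 : ∑ j : Fin n, ∑ k ∈ univ.erase j,
        ∑ A ∈ ((univ.erase j).erase k).powerset,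
          (-2 / (x j - x k) ^ 3) *
            ((∏ l ∈ A, (1 / (x j - x l) ^ 2)) * c ^ (n - (A.card + 2)))
      = ∑ D ∈ (univ : Finset (Fin n)).powerset, ∑ j ∈ D, ∑ k ∈ D.erase j,
          (-2 / (x j - x k) ^ 3) *
            ((∏ l ∈ (D.erase j).erase k, (1 / (x j - x l) ^ 2)) * c ^ (n - D.card)) := by
    rw [Finset.sum_sigma', Finset.sum_sigma', Finset.sum_sigma', Finset.sum_sigma']
    refine Finset.sum_bij'
      (i := fun (r : Σ _ : (Σ _ : Fin n, Fin n), Finset (Fin n)) _ =>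
        (⟨⟨insert r.1.1 (insert r.1.2 r.2), r.1.1⟩, r.1.2⟩ :
          Σ _ : (Σ _ : Finset (Fin n), Fin n), Fin n))
      (j := fun (s : Σ _ : (Σ _ : Finset (Fin n), Fin n), Fin n) _ =>
        (⟨⟨s.1.2, s.2⟩, (s.1.1.erase s.1.2).erase s.2⟩ :
          Σ _ : (Σ _ : Fin n, Fin n), Finset (Fin n)))
      ?_ ?_ ?_ ?_ ?_
    · rintro ⟨⟨j, k⟩, A⟩ hp
      simp only [mem_sigma, mem_univ, true_and, mem_powerset, mem_erase] at hp
      obtain ⟨hkj, hA⟩ := hp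
      exact mem_sigma.mpr ⟨mem_sigma.mpr ⟨mem_powerset.mpr (subset_univ _),
        mem_insert_self _ _⟩, mem_erase.mpr ⟨hkj.1, by simp⟩⟩
    · rintro ⟨⟨D, j⟩, k⟩ hq
      simp only [mem_sigma, mem_powerset, mem_erase, mem_univ, true_and, and_true] at hq
      obtain ⟨⟨hD, hj⟩, hkj, hk⟩ := hq
      exact mem_sigma.mpr ⟨mem_sigma.mpr ⟨mem_univ _, mem_erase.mpr ⟨hkj, mem_univ _⟩⟩,
        mem_powerset.mpr (erase_subset_erase _ (erase_subset_erase _ hD))⟩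
    · rintro ⟨⟨j, k⟩, A⟩ hp
      simp only [mem_sigma, mem_univ, true_and, mem_powerset, mem_erase] at hp
      obtain ⟨⟨hkj, _⟩, hA⟩ := hp
      have hjA : j ∉ A := fun h => ((mem_erase.mp ((mem_erase.mp (hA h)).2)).1) rfl
      have hkA : k ∉ A := fun h => (mem_erase.mp (hA h)).1 rfl
      have hjkA : j ∉ insert k A := by simp [hkj.symm, hjA, Ne.symm hkj]
      simp only [Sigma.mk.inj_iff, heq_eq_eq, true_and]
      rw [Finset.erase_insert hjkA, Finset.erase_insert hkA]
    · rintro ⟨⟨D, j⟩, k⟩ hq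
      simp only [mem_sigma, mem_powerset, mem_erase, mem_univ, true_and, and_true] at hq
      obtain ⟨⟨hD, hj⟩, hkj, hk⟩ := hq
      simp only [Sigma.mk.inj_iff, heq_eq_eq, and_true, true_and]
      have hkDj : k ∈ D.erase j := mem_erase.mpr ⟨hkj, hk⟩
      rw [Finset.insert_erase hkDj, Finset.insert_erase hj]
    · rintro ⟨⟨j, k⟩, A⟩ hp
      simp only [mem_sigma, mem_univ, true_and, mem_powerset, mem_erase] at hp
      obtain ⟨⟨hkj, _⟩, hA⟩ := hp
      have hjA : j ∉ A := fun h => ((mem_erase.mp ((mem_erase.mp (hA h)).2)).1) rfl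
      have hkA : k ∉ A := fun h => (mem_erase.mp (hA h)).1 rfl
      have hjkA : j ∉ insert k A := by simp [hjA, Ne.symm hkj]
      have hcard : (insert j (insert k A)).card = A.card + 2 := by
        rw [card_insert_of_notMem hjkA, card_insert_of_notMem hkA]
      simp only
      rw [Finset.erase_insert hjkA, Finset.erase_insert hkA, hcard]
  rw [h2]
  refine Finset.sum_eq_zero fun D _ => ?_
  have hU := lemU D x (hx.injOn)
  calc ∑ j ∈ D, ∑ k ∈ D.erase j,
        (-2 / (x j - x k) ^ 3) *
          ((∏ l ∈ (D.erase j).erase k, (1 / (x j - x l) ^ 2)) * c ^ (n - D.card))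
      = (∑ j ∈ D, ∑ k ∈ D.erase j, (-2 / (x j - x k) ^ 3) *
          ∏ l ∈ (D.erase j).erase k, (1 / (x j - x l) ^ 2)) * c ^ (n - D.card) := by
        simp only [Finset.sum_mul]
        exact sum_congr rfl fun j _ => sum_congr rfl fun k _ => by ring
    _ = 0 := by rw [hU, zero_mul]
end

section
/- Let n ≥ 4 be even and let F(x) = cos(x)/sin²(x). For all real numbers x₁, …, xₙ such that x_j - x_k is not an integer multiple of π for all j ≠ k, one has Σ_{j=1}^n Σ_{k≠j} F'(x_j - x_k) Π_{l≠j,l≠k} F(x_j - x_l) = 0. -/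
open Finset
open Polynomial

private lemma deriv_fin_prod {ι : Type*} [DecidableEq ι] (s : Finset ι) (f : ι → ℂ[X]) :
    derivative (∏ i ∈ s, f i) = ∑ i ∈ s, (∏ j ∈ s.erase i, f j) * derivative (f i) := by
  induction s using Finset.induction_on with
  | empty => simp
  | insert x s hx ih =>
    rw [Finset.prod_insert hx, derivative_mul, ih, Finset.sum_insert hx,
      Finset.erase_insert hx, Finset.mul_sum]
    congr 1
    · exact mul_comm _ _
    · refine Finset.sum_congr rfl fun i hi => ?_
      have hne : x ≠ i := fun h => hx (h ▸ hi)
      rw [Finset.erase_insert_of_ne hne,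
        Finset.prod_insert (fun h => hx (Finset.mem_of_mem_erase h)), mul_assoc]

private lemma sq_dvd_of_double_root {p : ℂ[X]} {t : ℂ}
    (h0 : p.eval t = 0) (h1 : p.derivative.eval t = 0) : (X - C t)^2 ∣ p := by
  obtain ⟨q, hq⟩ := (Polynomial.dvd_iff_isRoot.2 h0)
  have hd : p.derivative = q + (X - C t) * q.derivative := by
    rw [hq, derivative_mul]
    simp [derivative_sub]
  have hq0 : q.eval t = 0 := by
    have := h1
    rw [hd] at this
    simpa using this
  obtain ⟨r, hr⟩ := (Polynomial.dvd_iff_isRoot.2 hq0)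
  rw [hq, hr, sq]
  exact ⟨r, by ring⟩

private lemma deriv_sq_eval {t u : ℂ} : (derivative ((X - C t)^2)).eval u = 2*(u - t) := by
  simp [sq, derivative_mul, derivative_sub]
  ring

private lemma key_sum_zero {n : ℕ} (hn : 4 ≤ n) (a : Fin n → ℂ) (inj : Function.Injective a)
    (N : ℂ[X]) (hdeg : N.natDegree ≤ 2*n - 2)
    (A B : Fin n → ℂ)
    (h1 : ∀ k, N.eval (a k) = A k * (∏ j ∈ univ.erase k, (X - C (a j))^2).eval (a k))
    (h2 : ∀ k, N.derivative.eval (a k) =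
        A k * (derivative (∏ j ∈ univ.erase k, (X - C (a j))^2)).eval (a k)
        + B k * (∏ j ∈ univ.erase k, (X - C (a j))^2).eval (a k)) :
    ∑ k, B k = 0 := by
  set D : Fin n → ℂ[X] := fun k => ∏ j ∈ univ.erase k, (X - C (a j))^2 with hD
  have hDdvd : ∀ j k : Fin n, j ≠ k → (X - C (a k))^2 ∣ D j := by
    intro j k hjk
    exact Finset.dvd_prod_of_mem _ (Finset.mem_erase.2 ⟨fun h => hjk h.symm, Finset.mem_univ _⟩)
  have hDval : ∀ j k : Fin n, j ≠ k → (D j).eval (a k) = 0 := by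
    intro j k hjk
    obtain ⟨q, hq⟩ := hDdvd j k hjk
    rw [hq]
    simp
  have hD'val : ∀ j k : Fin n, j ≠ k → (derivative (D j)).eval (a k) = 0 := by
    intro j k hjk
    obtain ⟨q, hq⟩ := hDdvd j k hjk
    rw [hq, derivative_mul]
    simp [deriv_sq_eval]
  set R : ℂ[X] := N - ∑ k, (C (A k) + C (B k) * (X - C (a k))) * D k with hR
  have hRval : ∀ k, R.eval (a k) = 0 := by
    intro k
    rw [hR]
    rw [eval_sub, eval_finset_sum]
    rw [Finset.sum_eq_single k]
    · simp [h1 k, hD]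
    · intro j _ hjk
      simp [hDval j k hjk]
    · intro h
      exact absurd (Finset.mem_univ k) h
  have hR'val : ∀ k, R.derivative.eval (a k) = 0 := by
    intro k
    rw [hR, derivative_sub, derivative_sum]
    rw [eval_sub, eval_finset_sum]
    rw [Finset.sum_eq_single k]
    · rw [derivative_mul, eval_add, eval_mul, eval_mul]
      have hlin : (derivative (C (A k) + C (B k) * (X - C (a k)))) = C (B k) := by
        simp [derivative_sub]
      rw [hlin]
      simp only [eval_C, eval_add, eval_mul, eval_sub, eval_X, sub_self, mul_zero, add_zero]
      rw [h2 k]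
      ring
    · intro j _ hjk
      rw [derivative_mul, eval_add, eval_mul, eval_mul, hDval j k hjk, hD'val j k hjk]
      ring
    · intro h
      exact absurd (Finset.mem_univ k) h
  have hdvd : ∀ k, (X - C (a k))^2 ∣ R := fun k => sq_dvd_of_double_root (hRval k) (hR'val k)
  have hcop : (↑(univ : Finset (Fin n)) : Set (Fin n)).Pairwise
      (Function.onFun IsCoprime fun k => (X - C (a k))^2) := by
    intro i _ j _ hij
    exact ((pairwise_coprime_X_sub_C inj) hij).pow
  have hproddvd : (∏ k, (X - C (a k))^2) ∣ R :=
    Finset.prod_dvd_of_coprime hcop (fun k _ => hdvd k)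
  have hDdeg : ∀ k, (D k).natDegree = 2*n - 2 := by
    intro k
    rw [hD]
    rw [Polynomial.natDegree_prod]
    · have : ∀ j ∈ univ.erase k, ((X - C (a j))^2).natDegree = 2 := by
        intro j _
        rw [Polynomial.natDegree_pow, Polynomial.natDegree_X_sub_C]
      rw [Finset.sum_congr rfl this, Finset.sum_const, Finset.card_erase_of_mem (Finset.mem_univ _),
        Finset.card_univ, Fintype.card_fin, smul_eq_mul]
      omega
    · intro j _
      exact pow_ne_zero _ (Polynomial.X_sub_C_ne_zero _)
  have hProdDeg : (∏ k : Fin n, (X - C (a k))^2).natDegree = 2*n := by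
    rw [Polynomial.natDegree_prod]
    · have : ∀ j ∈ (univ : Finset (Fin n)), ((X - C (a j))^2).natDegree = 2 := by
        intro j _
        rw [Polynomial.natDegree_pow, Polynomial.natDegree_X_sub_C]
      rw [Finset.sum_congr rfl this, Finset.sum_const, Finset.card_univ, Fintype.card_fin,
        smul_eq_mul]
      ring
    · intro j _
      exact pow_ne_zero _ (Polynomial.X_sub_C_ne_zero _)
  have hRdeg : R.natDegree ≤ 2*n - 1 := by
    rw [hR]
    refine le_trans (Polynomial.natDegree_sub_le _ _) ?_
    rw [max_le_iff]
    constructor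
    · omega
    · refine le_trans (Polynomial.natDegree_sum_le_of_forall_le _ _ ?_) le_rfl
      intro k _
      refine le_trans (Polynomial.natDegree_mul_le) ?_
      have h1' : (C (A k) + C (B k) * (X - C (a k))).natDegree ≤ 1 := by
        refine le_trans (Polynomial.natDegree_add_le _ _) ?_
        rw [max_le_iff]
        refine ⟨by simp, le_trans (Polynomial.natDegree_mul_le) ?_⟩
        simp [Polynomial.natDegree_X_sub_C]
      have := hDdeg k
      omega
  have hR0 : R = 0 := by
    by_contra h0
    have := Polynomial.natDegree_le_of_dvd hproddvd h0
    rw [hProdDeg] at this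
    omega
  have hNid : N = ∑ k, (C (A k) + C (B k) * (X - C (a k))) * D k := by
    have := sub_eq_zero.1 hR0
    exact this
  have hcoeff := congrArg (fun p : ℂ[X] => p.coeff (2*n - 1)) hNid
  simp only [Polynomial.finset_sum_coeff] at hcoeff
  have hL : N.coeff (2*n-1) = 0 := by
    apply Polynomial.coeff_eq_zero_of_natDegree_lt
    omega
  have hRc : ∀ k, ((C (A k) + C (B k) * (X - C (a k))) * D k).coeff (2*n-1) = B k := by
    intro k
    rw [add_mul, Polynomial.coeff_add, mul_assoc, Polynomial.coeff_C_mul, Polynomial.coeff_C_mul]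
    have hc1 : (D k).coeff (2*n-1) = 0 := by
      apply Polynomial.coeff_eq_zero_of_natDegree_lt
      rw [hDdeg k]; omega
    have hmon : ((X - C (a k)) * D k).Monic := by
      refine (Polynomial.monic_X_sub_C _).mul ?_
      exact Polynomial.monic_prod_of_monic _ _ (fun j _ => (Polynomial.monic_X_sub_C _).pow 2)
    have hDk0 : D k ≠ 0 :=
      (Polynomial.monic_prod_of_monic _ _ (fun j _ => (Polynomial.monic_X_sub_C _).pow 2)).ne_zero
    have hdeg2 : ((X - C (a k)) * D k).natDegree = 2*n-1 := by
      rw [Polynomial.natDegree_mul (Polynomial.X_sub_C_ne_zero _) hDk0,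
        Polynomial.natDegree_X_sub_C, hDdeg k]
      omega
    have hc2 : ((X - C (a k)) * D k).coeff (2*n-1) = 1 := by
      rw [← hdeg2]
      exact hmon.coeff_natDegree
    rw [hc1, hc2]
    ring
  rw [hL] at hcoeff
  rw [Finset.sum_congr rfl (fun k _ => hRc k)] at hcoeff
  exact hcoeff.symm

private lemma alg_lemma {n m : ℕ} (hn : 4 ≤ n) (hm : n = 2*m+2) (a : Fin n → ℂ)
    (inj : Function.Injective a) :
    ∑ k, ∑ k' ∈ univ.erase k,
      (-(a k)^m * ((a k)^2 + 6*(a k)*(a k') + (a k')^2)/((a k) - (a k'))^3) *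
        ∏ l ∈ (univ.erase k).erase k', ((a k)+(a l))/((a k)-(a l))^2 = 0 := by
  have hm1 : 1 ≤ m := by omega
  set N : ℂ[X] := X^m * ∏ l, (X + C (a l)) with hN
  set B : Fin n → ℂ := fun k => ∑ k' ∈ univ.erase k,
      (-(a k)^m * ((a k)^2 + 6*(a k)*(a k') + (a k')^2)/((a k) - (a k'))^3) *
        ∏ l ∈ (univ.erase k).erase k', ((a k)+(a l))/((a k)-(a l))^2 with hB
  have hDeval : ∀ k : Fin n, (∏ j ∈ univ.erase k, (X - C (a j))^2).eval (a k)
      = ∏ j ∈ univ.erase k, ((a k) - (a j))^2 := by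
    intro k; simp [eval_prod]
  have hdne : ∀ k : Fin n, ∀ j ∈ univ.erase k, ((a k) - (a j))^2 ≠ 0 := by
    intro k j hj
    have : a k ≠ a j := fun h => (Finset.mem_erase.1 hj).1 (inj h).symm
    exact pow_ne_zero _ (sub_ne_zero_of_ne this)
  have hdk : ∀ k : Fin n, (∏ j ∈ univ.erase k, ((a k) - (a j))^2) ≠ 0 := by
    intro k
    exact Finset.prod_ne_zero_iff.2 (hdne k)
  set A : Fin n → ℂ := fun k => N.eval (a k) / (∏ j ∈ univ.erase k, ((a k) - (a j))^2) with hA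
  have key := key_sum_zero hn a inj N ?_ A B ?_ ?_
  · rw [hB] at key; exact key
  · -- degree bound
    have hp : (∏ l, (X + C (a l)) : ℂ[X]) = ∏ l, (X - C (-(a l))) := by
      simp [sub_neg_eq_add]
    have hdegN : N.natDegree = m + n := by
      rw [hN, Polynomial.natDegree_mul (pow_ne_zero _ Polynomial.X_ne_zero) ?_]
      · rw [Polynomial.natDegree_X_pow, hp, Polynomial.natDegree_prod]
        · simp [Polynomial.natDegree_X_sub_C]
        · intro l _; exact Polynomial.X_sub_C_ne_zero _
      · rw [hp]
        exact (Polynomial.monic_prod_of_monic _ _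
          (fun l _ => Polynomial.monic_X_sub_C _)).ne_zero
    omega
  · -- h1
    intro k
    rw [hDeval k, hA]
    rw [div_mul_cancel₀ _ (hdk k)]
  · -- h2
    intro k
    have hane : ∀ j ∈ univ.erase k, (a k) - (a j) ≠ 0 := by
      intro j hj
      exact sub_ne_zero_of_ne (fun h => (Finset.mem_erase.1 hj).1 (inj h).symm)
    -- (1) N eval
    have hNeval : N.eval (a k) = 2 * (a k)^(m+1) * ∏ l ∈ univ.erase k, ((a k) + (a l)) := by
      rw [hN]
      simp only [eval_mul, eval_pow, eval_X, eval_prod, eval_add, eval_C]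
      rw [← Finset.prod_erase_mul _ _ (Finset.mem_univ k)]
      ring
    -- (2) N' eval
    have hN'eval : N.derivative.eval (a k) =
        (2*(m:ℂ)+1) * (a k)^m * (∏ l ∈ univ.erase k, ((a k) + (a l)))
        + 2*(a k)^(m+1) * ∑ k' ∈ univ.erase k, ∏ l ∈ (univ.erase k).erase k', ((a k) + (a l)) := by
      rw [hN, derivative_mul, derivative_X_pow, deriv_fin_prod]
      simp only [eval_add, eval_mul, eval_pow, eval_X, eval_C, eval_finset_sum, eval_prod,
        derivative_add, derivative_X, derivative_C, add_zero, eval_one, mul_one,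
        Nat.add_sub_cancel]
      rw [← Finset.sum_erase_add _ _ (Finset.mem_univ k)]
      have hterm : ∀ k' ∈ univ.erase k,
          (∏ l ∈ univ.erase k', ((a k) + (a l))) =
          2 * (a k) * ∏ l ∈ (univ.erase k).erase k', ((a k) + (a l)) := by
        intro k' hk'
        have hkmem : k ∈ univ.erase k' :=
          Finset.mem_erase.2 ⟨fun h => (Finset.mem_erase.1 hk').1 h.symm, Finset.mem_univ _⟩
        rw [← Finset.prod_erase_mul _ _ hkmem, Finset.erase_right_comm]
        ring
      rw [Finset.sum_congr rfl hterm, ← Finset.mul_sum,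
        ← Finset.prod_erase_mul _ (fun l => (a k) + (a l)) (Finset.mem_univ k)]
      have hpow : (a k)^m = (a k)^(m-1) * a k := by
        rw [← pow_succ]; congr 1; omega
      have hpow2 : (a k)^(m+1) = (a k)^(m-1) * a k * a k := by
        rw [← pow_succ, ← pow_succ]; congr 1; omega
      rw [hpow, hpow2]
      ring
    have hD'eval : (derivative (∏ j ∈ univ.erase k, (X - C (a j))^2)).eval (a k)
        = ∑ k' ∈ univ.erase k,
          (∏ l ∈ (univ.erase k).erase k', ((a k) - (a l))^2) * (2*((a k) - (a k'))) := by
      rw [deriv_fin_prod]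
      simp only [eval_finset_sum, eval_mul, eval_prod, eval_pow, eval_sub, eval_X, eval_C,
        deriv_sq_eval]
    simp only [hA, hB]
    rw [hN'eval, hNeval, hDeval, hD'eval]
    conv_rhs => rw [Finset.mul_sum, Finset.sum_mul, ← Finset.sum_add_distrib]
    have hterm2 : ∀ k' ∈ univ.erase k,
        2 * (a k)^(m+1) * (∏ l ∈ univ.erase k, ((a k) + (a l)))
            / (∏ j ∈ univ.erase k, ((a k) - (a j))^2)
          * ((∏ l ∈ (univ.erase k).erase k', ((a k) - (a l))^2) * (2*((a k) - (a k'))))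
        + (-(a k)^m * ((a k)^2 + 6*(a k)*(a k') + (a k')^2)/((a k) - (a k'))^3 *
            ∏ l ∈ (univ.erase k).erase k', ((a k)+(a l))/((a k)-(a l))^2)
          * (∏ j ∈ univ.erase k, ((a k) - (a j))^2)
        = 2 * (a k)^(m+1) * (∏ l ∈ (univ.erase k).erase k', ((a k) + (a l)))
          + (a k)^m * (∏ l ∈ univ.erase k, ((a k) + (a l))) := by
      intro k' hk'
      have hc : (a k) - (a k') ≠ 0 := hane k' hk'
      have hP1 : (∏ l ∈ (univ.erase k).erase k', ((a k) - (a l))^2) ≠ 0 :=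
        Finset.prod_ne_zero_iff.2 (fun l hl => hdne k l (Finset.mem_of_mem_erase hl))
      rw [Finset.prod_div_distrib,
        ← Finset.prod_erase_mul _ (fun j => ((a k) - (a j))^2) hk',
        ← Finset.prod_erase_mul _ (fun l => ((a k) + (a l))) hk']
      field_simp
      ring
    rw [Finset.sum_congr rfl hterm2, Finset.sum_add_distrib,
      Finset.sum_const, Finset.card_erase_of_mem (Finset.mem_univ _),
      Finset.card_univ, Fintype.card_fin, nsmul_eq_mul]
    have hcast : ((n-1 : ℕ) : ℂ) = 2*(m:ℂ)+1 := by
      have h' : (n-1 : ℕ) = 2*m+1 := by omega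
      rw [h']; push_cast; ring
    rw [hcast, Finset.mul_sum]
    ring

private lemma cos_mul_eq (p q : ℝ) :
    Complex.cos ((p:ℂ) - (q:ℂ)) * (2 * Complex.exp ((p:ℂ)*Complex.I) * Complex.exp ((q:ℂ)*Complex.I))
      = Complex.exp ((p:ℂ)*Complex.I)^2 + Complex.exp ((q:ℂ)*Complex.I)^2 := by
  simp only [Complex.cos]
  have e1 : ((p:ℂ) - q) * Complex.I = (p:ℂ)*Complex.I - (q:ℂ)*Complex.I := by ring
  have e2 : -((p:ℂ) - q) * Complex.I = (q:ℂ)*Complex.I - (p:ℂ)*Complex.I := by ring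
  rw [e1, e2, Complex.exp_sub, Complex.exp_sub]
  field_simp [Complex.exp_ne_zero]

private lemma sin_mul_eq (p q : ℝ) :
    Complex.sin ((p:ℂ) - (q:ℂ)) *
        (2 * Complex.I * Complex.exp ((p:ℂ)*Complex.I) * Complex.exp ((q:ℂ)*Complex.I))
      = Complex.exp ((p:ℂ)*Complex.I)^2 - Complex.exp ((q:ℂ)*Complex.I)^2 := by
  simp only [Complex.sin]
  have e1 : ((p:ℂ) - q) * Complex.I = (p:ℂ)*Complex.I - (q:ℂ)*Complex.I := by ring
  have e2 : -((p:ℂ) - q) * Complex.I = (q:ℂ)*Complex.I - (p:ℂ)*Complex.I := by ring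
  rw [e1, e2, Complex.exp_sub, Complex.exp_sub]
  have hI : Complex.I * Complex.I = -1 := Complex.I_mul_I
  field_simp [Complex.exp_ne_zero]
  ring_nf
  rw [Complex.I_sq]
  ring

private lemma Fc_eq (p q : ℝ) (hs : Real.sin (p - q) ≠ 0) :
    ((Real.cos (p-q) / Real.sin (p-q)^2 : ℝ) : ℂ)
      = -2 * Complex.exp ((p:ℂ)*Complex.I) * Complex.exp ((q:ℂ)*Complex.I) *
          (Complex.exp ((p:ℂ)*Complex.I)^2 + Complex.exp ((q:ℂ)*Complex.I)^2) /
          (Complex.exp ((p:ℂ)*Complex.I)^2 - Complex.exp ((q:ℂ)*Complex.I)^2)^2 := by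
  set zp := Complex.exp ((p:ℂ)*Complex.I) with hzp
  set zq := Complex.exp ((q:ℂ)*Complex.I) with hzq
  have hzp0 : zp ≠ 0 := Complex.exp_ne_zero _
  have hzq0 : zq ≠ 0 := Complex.exp_ne_zero _
  have hsc : Complex.sin ((p:ℂ) - (q:ℂ)) ≠ 0 := by
    intro h
    apply hs
    have : ((Real.sin (p - q) : ℝ) : ℂ) = Complex.sin ((p:ℂ) - (q:ℂ)) := by
      push_cast; rfl
    rw [h] at this
    exact_mod_cast this
  have hD : zp^2 - zq^2 ≠ 0 := by
    rw [← sin_mul_eq p q]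
    apply mul_ne_zero hsc
    simp [Complex.I_ne_zero, hzp0, hzq0]
  have hcos : Complex.cos ((p:ℂ) - (q:ℂ)) = (zp^2 + zq^2) / (2 * zp * zq) := by
    rw [eq_div_iff (by simp [hzp0, hzq0])]
    exact cos_mul_eq p q
  have hsin : Complex.sin ((p:ℂ) - (q:ℂ)) = (zp^2 - zq^2) / (2 * Complex.I * zp * zq) := by
    rw [eq_div_iff (by simp [hzp0, hzq0, Complex.I_ne_zero])]
    exact sin_mul_eq p q
  have hcast : ((Real.cos (p-q) / Real.sin (p-q)^2 : ℝ) : ℂ)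
      = Complex.cos ((p:ℂ) - (q:ℂ)) / Complex.sin ((p:ℂ) - (q:ℂ))^2 := by
    push_cast; rfl
  rw [hcast, hcos, hsin]
  have hI : Complex.I * Complex.I = -1 := Complex.I_mul_I
  field_simp
  ring_nf
  rw [Complex.I_sq]
  ring

private lemma Fderiv_real (t0 : ℝ) (hs : Real.sin t0 ≠ 0) :
    deriv (fun t => Real.cos t / Real.sin t ^ 2) t0
      = -((Real.sin t0)^2 + 2*(Real.cos t0)^2) / (Real.sin t0)^3 := by
  have hc : HasDerivAt Real.cos (-Real.sin t0) t0 := Real.hasDerivAt_cos t0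
  have hs2 : HasDerivAt (fun t => Real.sin t ^ 2)
      ((2:ℕ) * Real.sin t0 ^ (2-1) * Real.cos t0) t0 := (Real.hasDerivAt_sin t0).pow 2
  have hne : Real.sin t0 ^ 2 ≠ 0 := pow_ne_zero _ hs
  have h := hc.div hs2 hne
  rw [show (fun t => Real.cos t / Real.sin t ^ 2) = (Real.cos / fun t => Real.sin t ^ 2) from rfl, h.deriv]
  field_simp
  ring

private lemma Fderivc_eq (p q : ℝ) (hs : Real.sin (p - q) ≠ 0) :
    ((deriv (fun t => Real.cos t / Real.sin t ^ 2) (p - q) : ℝ) : ℂ)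
      = 2 * Complex.I * Complex.exp ((p:ℂ)*Complex.I) * Complex.exp ((q:ℂ)*Complex.I) *
          ((Complex.exp ((p:ℂ)*Complex.I)^2)^2
            + 6 * Complex.exp ((p:ℂ)*Complex.I)^2 * Complex.exp ((q:ℂ)*Complex.I)^2
            + (Complex.exp ((q:ℂ)*Complex.I)^2)^2) /
          (Complex.exp ((p:ℂ)*Complex.I)^2 - Complex.exp ((q:ℂ)*Complex.I)^2)^3 := by
  set zp := Complex.exp ((p:ℂ)*Complex.I) with hzp
  set zq := Complex.exp ((q:ℂ)*Complex.I) with hzq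
  have hzp0 : zp ≠ 0 := Complex.exp_ne_zero _
  have hzq0 : zq ≠ 0 := Complex.exp_ne_zero _
  have hsc : Complex.sin ((p:ℂ) - (q:ℂ)) ≠ 0 := by
    intro h
    apply hs
    have : ((Real.sin (p - q) : ℝ) : ℂ) = Complex.sin ((p:ℂ) - (q:ℂ)) := by
      push_cast; rfl
    rw [h] at this
    exact_mod_cast this
  have hD : zp^2 - zq^2 ≠ 0 := by
    rw [← sin_mul_eq p q]
    apply mul_ne_zero hsc
    simp [Complex.I_ne_zero, hzp0, hzq0]
  have hcos : Complex.cos ((p:ℂ) - (q:ℂ)) = (zp^2 + zq^2) / (2 * zp * zq) := by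
    rw [eq_div_iff (by simp [hzp0, hzq0])]
    exact cos_mul_eq p q
  have hI : Complex.I * Complex.I = -1 := Complex.I_mul_I
  have hsin : Complex.sin ((p:ℂ) - (q:ℂ)) = -Complex.I * (zp^2 - zq^2) / (2 * zp * zq) := by
    rw [eq_div_iff (by simp [hzp0, hzq0])]
    linear_combination (-Complex.I) * (sin_mul_eq p q)
      + (2 * Complex.sin ((p:ℂ)-(q:ℂ)) * zp * zq) * hI
  rw [Fderiv_real _ hs]
  have hcast : ((-((Real.sin (p-q))^2 + 2*(Real.cos (p-q))^2) / (Real.sin (p-q))^3 : ℝ) : ℂ)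
      = -((Complex.sin ((p:ℂ)-(q:ℂ)))^2 + 2*(Complex.cos ((p:ℂ)-(q:ℂ)))^2)
          / (Complex.sin ((p:ℂ)-(q:ℂ)))^3 := by
    push_cast; rfl
  rw [hcast, hcos, hsin]
  field_simp
  ring_nf
  simp only [Complex.I_sq, Complex.I_pow_four,
    show (Complex.I^3 : ℂ) = -Complex.I by rw [pow_succ, Complex.I_sq]; ring, mul_one, mul_neg_one]
  ring_nf

/-- the new solution `F(x) = cos(x)/sin²(x)` satisfies
`∑ⱼ ∑_{k≠j} F'(xⱼ−x_k) ∏_{l≠j,k} F(xⱼ−x_l) = 0` for every even `n ≥ 4` and all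
real `x₁, …, xₙ` whose differences avoid the integer multiples of `π`. -/
theorem stmt_8 (n : ℕ) (hn : 4 ≤ n) (hneven : Even n) (x : Fin n → ℝ)
    (hx : ∀ j k : Fin n, j ≠ k → ∀ m : ℤ, x j - x k ≠ m * Real.pi) :
    ∑ j : Fin n, ∑ k ∈ univ.erase j,
      deriv (fun t => Real.cos t / Real.sin t ^ 2) (x j - x k) *
        ∏ l ∈ (univ.erase j).erase k,
          Real.cos (x j - x l) / Real.sin (x j - x l) ^ 2 = 0 := by
  obtain ⟨m0, hm0⟩ : ∃ m0, n = 2*m0+2 := by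
    obtain ⟨p, hp⟩ := hneven; exact ⟨p-1, by omega⟩
  set z : Fin n → ℂ := fun j => Complex.exp ((x j : ℂ) * Complex.I) with hz
  set a : Fin n → ℂ := fun j => z j ^ 2 with haz
  have hz0 : ∀ j, z j ≠ 0 := fun j => Complex.exp_ne_zero _
  have hsin : ∀ j k : Fin n, j ≠ k → Real.sin (x j - x k) ≠ 0 := by
    intro j k hjk h
    obtain ⟨t, ht⟩ := Real.sin_eq_zero_iff.1 h
    exact hx j k hjk t ht.symm
  have key2 : ∀ j : Fin n, a j = Complex.exp (((2 * x j : ℝ) : ℂ) * Complex.I) := by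
    intro j
    simp only [haz, hz, sq, ← Complex.exp_add]
    congr 1
    push_cast
    ring
  have inj : Function.Injective a := by
    intro j k hjk
    by_contra hne
    rw [key2 j, key2 k] at hjk
    obtain ⟨t, ht⟩ := Complex.exp_eq_exp_iff_exists_int.1 hjk
    have hre : ((2 * x j : ℝ) : ℂ) = ((2 * x k : ℝ) : ℂ) + (t : ℂ) * (2 * (Real.pi : ℂ)) := by
      apply mul_right_cancel₀ Complex.I_ne_zero
      linear_combination ht
    have hre2 : (2 * x j : ℝ) = 2 * x k + (t : ℝ) * (2 * Real.pi) := by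
      exact_mod_cast hre
    exact hx j k hne t (by linarith)
  have hane : ∀ j k : Fin n, j ≠ k → a j - a k ≠ 0 := by
    intro j k hjk
    exact sub_ne_zero_of_ne (fun h => hjk (inj h))
  set K' : ℂ := -2 * Complex.I * (-2 : ℂ)^(n-2) * ∏ i, z i with hK'
  have hterm : ∀ j : Fin n, ∀ k ∈ univ.erase j,
      ((deriv (fun t => Real.cos t / Real.sin t ^ 2) (x j - x k) : ℝ) : ℂ) *
        ∏ l ∈ (univ.erase j).erase k,
          Complex.cos ((x j : ℂ) - (x l : ℂ)) / Complex.sin ((x j : ℂ) - (x l : ℂ))^2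
      = K' * ((-(a j)^m0 * ((a j)^2 + 6*(a j)*(a k) + (a k)^2)/((a j) - (a k))^3) *
          ∏ l ∈ (univ.erase j).erase k, ((a j)+(a l))/((a j)-(a l))^2) := by
    intro j k hk
    have hkj : k ≠ j := (Finset.mem_erase.1 hk).1
    have hFc : ∀ l ∈ (univ.erase j).erase k,
        Complex.cos ((x j : ℂ) - (x l : ℂ)) / Complex.sin ((x j : ℂ) - (x l : ℂ))^2
          = -2 * z j * z l * ((a j) + (a l)) / ((a j) - (a l))^2 := by
      intro l hl
      have hjl : j ≠ l := fun h =>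
        (Finset.mem_erase.1 (Finset.mem_of_mem_erase hl)).1 h.symm
      have h := Fc_eq (x j) (x l) (hsin j l hjl)
      push_cast at h ⊢
      simp only [hz, haz]
      exact h
    have hFd : ((deriv (fun t => Real.cos t / Real.sin t ^ 2) (x j - x k) : ℝ) : ℂ)
        = 2 * Complex.I * z j * z k *
            ((a j)^2 + 6*(a j)*(a k) + (a k)^2) / ((a j) - (a k))^3 := by
      have h := Fderivc_eq (x j) (x k) (hsin j k (fun h => hkj h.symm))
      simp only [hz, haz]
      exact h
    rw [Finset.prod_congr rfl hFc, hFd]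
    have hcard : ((univ.erase j).erase k).card = n - 2 := by
      rw [Finset.card_erase_of_mem hk, Finset.card_erase_of_mem (Finset.mem_univ _),
        Finset.card_univ, Fintype.card_fin]
      omega
    have hsplit : ∏ l ∈ (univ.erase j).erase k, (-2 * z j * z l * ((a j) + (a l)) / ((a j) - (a l))^2)
        = (-2 * z j)^(n-2) * (∏ l ∈ (univ.erase j).erase k, z l) *
          ∏ l ∈ (univ.erase j).erase k, (((a j)+(a l))/((a j)-(a l))^2) := by
      rw [← hcard, ← Finset.prod_const (-2 * z j), ← Finset.prod_mul_distrib,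
        ← Finset.prod_mul_distrib]
      exact Finset.prod_congr rfl fun l _ => by ring
    rw [hsplit]
    have hzprod : ((∏ l ∈ (univ.erase j).erase k, z l) * z k) * z j = ∏ i, z i := by
      rw [Finset.prod_erase_mul _ _ hk, Finset.prod_erase_mul _ _ (Finset.mem_univ j)]
    have hpow : (-2 * z j : ℂ)^(n-2) = (-2 : ℂ)^(n-2) * (a j)^m0 := by
      rw [mul_pow, haz]
      congr 1
      rw [show n-2 = 2*m0 by omega, pow_mul]
    rw [hpow, hK', ← hzprod]
    ring
  have hcoe : ((∑ j : Fin n, ∑ k ∈ univ.erase j,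
      deriv (fun t => Real.cos t / Real.sin t ^ 2) (x j - x k) *
        ∏ l ∈ (univ.erase j).erase k,
          Real.cos (x j - x l) / Real.sin (x j - x l) ^ 2 : ℝ) : ℂ) = 0 := by
    push_cast
    rw [Finset.sum_congr rfl (fun j _ => Finset.sum_congr rfl (hterm j))]
    rw [Finset.sum_congr rfl (fun j _ => (Finset.mul_sum _ _ _).symm), ← Finset.mul_sum]
    rw [alg_lemma hn hm0 a inj, mul_zero]
  exact_mod_cast hcoe
end

section
/- Let F(x) = cosh(x)/sinh²(x). There exist pairwise distinct real numbers x₁, x₂, x₃ such that Σ_{j=1}^3 Σ_{k≠j} F'(x_j - x_k) Π_{l≠j,l≠k} F(x_j - x_l) ≠ 0. In other words, F fails to satisfy the functional equation Σ_{j=1}^n ∂_j Π_{k≠j} F(x_j - x_k) = 0 for n = 3. -/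
open Finset

lemma derivG (t : ℝ) (h : Real.sinh t ≠ 0) :
    deriv (fun t => Real.cosh t / Real.sinh t ^ 2) t
      = (Real.sinh t ^ 2 - 2 * Real.cosh t ^ 2) / Real.sinh t ^ 3 := by
  have h1 : HasDerivAt (fun t => Real.cosh t / Real.sinh t ^ 2)
      ((Real.sinh t * Real.sinh t ^ 2 -
        Real.cosh t * ((2 : ℕ) * Real.sinh t ^ 1 * Real.cosh t)) / (Real.sinh t ^ 2) ^ 2) t :=
    (Real.hasDerivAt_cosh t).div ((Real.hasDerivAt_sinh t).pow 2) (pow_ne_zero 2 h)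
  rw [h1.deriv]
  field_simp
  ring

/-- `F(x) = cosh(x)/sinh²(x)` fails the functional equation
`∑ⱼ ∂ⱼ ∏_{k≠j} F(xⱼ−x_k) = 0` for `n = 3`: there is a pairwise distinct
configuration at which the expression is nonzero. -/
theorem stmt_9 :
    ∃ x : Fin 3 → ℝ, Function.Injective x ∧
      ∑ j : Fin 3, ∑ k ∈ univ.erase j,
        deriv (fun t => Real.cosh t / Real.sinh t ^ 2) (x j - x k) *
          ∏ l ∈ (univ.erase j).erase k,
            Real.cosh (x j - x l) / Real.sinh (x j - x l) ^ 2 ≠ 0 := by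
  have l2 : (0:ℝ) < Real.log 2 := Real.log_pos (by norm_num)
  have l3 : (0:ℝ) < Real.log 3 := Real.log_pos (by norm_num)
  have l6 : (0:ℝ) < Real.log 6 := Real.log_pos (by norm_num)
  have l26 : Real.log 2 < Real.log 6 := Real.log_lt_log (by norm_num) (by norm_num)
  refine ⟨![0, Real.log 2, Real.log 6], ?_, ?_⟩
  · intro i j hij
    fin_cases i <;> fin_cases j <;> simp_all
  · have e0 : (univ.erase (0:Fin 3)) = {1, 2} := by decide
    have e1 : (univ.erase (1:Fin 3)) = {0, 2} := by decide
    have e2 : (univ.erase (2:Fin 3)) = {0, 1} := by decide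
    rw [Fin.sum_univ_three, e0, e1, e2]
    rw [Finset.sum_pair (by decide), Finset.sum_pair (by decide), Finset.sum_pair (by decide)]
    have f01 : ({1, 2} : Finset (Fin 3)).erase 1 = {2} := by decide
    have f02 : ({1, 2} : Finset (Fin 3)).erase 2 = {1} := by decide
    have f10 : ({0, 2} : Finset (Fin 3)).erase 0 = {2} := by decide
    have f12 : ({0, 2} : Finset (Fin 3)).erase 2 = {0} := by decide
    have f20 : ({0, 1} : Finset (Fin 3)).erase 0 = {1} := by decide
    have f21 : ({0, 1} : Finset (Fin 3)).erase 1 = {0} := by decide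
    rw [f01, f02, f10, f12, f20, f21]
    simp only [Finset.prod_singleton, Matrix.cons_val_zero, Matrix.cons_val_one,
      Matrix.head_cons, Matrix.cons_val_two, Matrix.tail_cons]
    have d62 : Real.log 6 - Real.log 2 = Real.log 3 := by
      rw [← Real.log_div (by norm_num) (by norm_num)]; norm_num
    have d26 : Real.log 2 - Real.log 6 = -Real.log 3 := by rw [← d62]; ring
    rw [d26, d62, zero_sub, zero_sub, sub_zero, sub_zero]
    have h2 : Real.sinh (Real.log 2) ≠ 0 := Real.sinh_ne_zero.mpr (by linarith)
    have h3 : Real.sinh (Real.log 3) ≠ 0 := Real.sinh_ne_zero.mpr (by linarith)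
    have h6 : Real.sinh (Real.log 6) ≠ 0 := Real.sinh_ne_zero.mpr (by linarith)
    have hn2 : Real.sinh (-Real.log 2) ≠ 0 := by rw [Real.sinh_neg]; simpa using h2
    have hn3 : Real.sinh (-Real.log 3) ≠ 0 := by rw [Real.sinh_neg]; simpa using h3
    have hn6 : Real.sinh (-Real.log 6) ≠ 0 := by rw [Real.sinh_neg]; simpa using h6
    rw [derivG _ h2, derivG _ h3, derivG _ h6, derivG _ hn2, derivG _ hn3, derivG _ hn6]
    rw [Real.sinh_neg, Real.sinh_neg, Real.sinh_neg, Real.cosh_neg, Real.cosh_neg, Real.cosh_neg,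
      Real.sinh_log (by norm_num : (0:ℝ) < 2), Real.sinh_log (by norm_num : (0:ℝ) < 3),
      Real.sinh_log (by norm_num : (0:ℝ) < 6), Real.cosh_log (by norm_num : (0:ℝ) < 2),
      Real.cosh_log (by norm_num : (0:ℝ) < 3), Real.cosh_log (by norm_num : (0:ℝ) < 6)]
    norm_num
end

section
/- Let n ≥ 2, let μ ≠ 0 be real, and let F be an even differentiable function defined on ℝ \ {0}. Then Σ_{j=1}^n Σ_{k≠j} F'((j-k)μ) Π_{l≠j,l≠k} F((j-l)μ) = 0, i.e. the expression Σ_{j=1}^n ∂_j Π_{k≠j} F(x_j - x_k) vanishes when evaluated at the equally spaced configuration x_j = jμ. -/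
open Finset

private lemma deriv_odd (F : ℝ → ℝ) (heven : ∀ x : ℝ, x ≠ 0 → F (-x) = F x)
    (x : ℝ) (hx : x ≠ 0) : deriv F (-x) = - deriv F x := by
  have h : F =ᶠ[nhds x] fun y => F (-y) := by
    filter_upwards [isOpen_ne.mem_nhds hx] with y hy using (heven y hy).symm
  have h2 : deriv F x = deriv (fun y => F (-y)) x := Filter.EventuallyEq.deriv_eq h
  rw [deriv_comp_neg] at h2
  linarith

private lemma rev_diff (n : ℕ) (μ : ℝ) (a b : Fin n) :
    ((a.rev : ℕ) : ℝ) * μ - ((b.rev : ℕ) : ℝ) * μ =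
      -((((a : ℕ) : ℝ)) * μ - (((b : ℕ) : ℝ)) * μ) := by
  have ha : (a : ℕ) + 1 ≤ n := a.isLt
  have hb : (b : ℕ) + 1 ≤ n := b.isLt
  rw [Fin.val_rev, Fin.val_rev, Nat.cast_sub ha, Nat.cast_sub hb]
  push_cast
  ring

private lemma diff_ne (μ : ℝ) (hμ : μ ≠ 0) {n : ℕ} {a b : Fin n} (h : a ≠ b) :
    (((a : ℕ) : ℝ)) * μ - (((b : ℕ) : ℝ)) * μ ≠ 0 := by
  rw [← sub_mul]
  refine mul_ne_zero ?_ hμ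
  rw [sub_ne_zero]
  exact_mod_cast fun hh => h (Fin.ext (by exact_mod_cast hh))

/-- for an even differentiable `F` on `ℝ \ {0}`, the expression
`∑ⱼ ∂ⱼ ∏_{k≠j} F(xⱼ−x_k)` vanishes at the equally spaced configuration
`x_j = jμ` (`μ ≠ 0`). -/
theorem stmt_10 (n : ℕ) (hn : 2 ≤ n) (μ : ℝ) (hμ : μ ≠ 0) (F : ℝ → ℝ)
    (hdiff : ∀ x : ℝ, x ≠ 0 → DifferentiableAt ℝ F x)
    (heven : ∀ x : ℝ, x ≠ 0 → F (-x) = F x) :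
    ∑ j : Fin n, ∑ k ∈ univ.erase j,
      deriv F (((j : ℕ) : ℝ) * μ - ((k : ℕ) : ℝ) * μ) *
        ∏ l ∈ (univ.erase j).erase k,
          F (((j : ℕ) : ℝ) * μ - ((l : ℕ) : ℝ) * μ) = 0 := by
  set f : Fin n → Fin n → ℝ := fun j k =>
      deriv F (((j : ℕ) : ℝ) * μ - ((k : ℕ) : ℝ) * μ) *
        ∏ l ∈ (univ.erase j).erase k,
          F (((j : ℕ) : ℝ) * μ - ((l : ℕ) : ℝ) * μ) with hf
  have hneg : ∀ j k : Fin n, k ≠ j → f j.rev k.rev = - f j k := by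
    intro j k hkj
    have hjk : j ≠ k := fun h => hkj h.symm
    have h1 : deriv F (((j.rev : ℕ) : ℝ) * μ - ((k.rev : ℕ) : ℝ) * μ)
        = - deriv F (((j : ℕ) : ℝ) * μ - ((k : ℕ) : ℝ) * μ) := by
      rw [rev_diff]
      exact deriv_odd F heven _ (diff_ne μ hμ hjk)
    have h2 : (∏ l ∈ (univ.erase j.rev).erase k.rev,
          F (((j.rev : ℕ) : ℝ) * μ - ((l : ℕ) : ℝ) * μ))
        = ∏ l ∈ (univ.erase j).erase k,
          F (((j : ℕ) : ℝ) * μ - ((l : ℕ) : ℝ) * μ) := by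
      refine Finset.prod_nbij' (fun l => l.rev) (fun l => l.rev) ?_ ?_ ?_ ?_ ?_
      · intro l hl
        simp only [mem_erase, mem_univ, and_true] at hl ⊢
        exact ⟨fun h => hl.1 (by rw [← h, Fin.rev_rev]),
          fun h => hl.2 (by rw [← h, Fin.rev_rev])⟩
      · intro l hl
        simp only [mem_erase, mem_univ, and_true] at hl ⊢
        exact ⟨fun h => hl.1 (Fin.rev_injective h),
          fun h => hl.2 (Fin.rev_injective h)⟩
      · intro l _; exact Fin.rev_rev l
      · intro l _; exact Fin.rev_rev l
      · intro l hl
        simp only [mem_erase, mem_univ, and_true] at hl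
        have hjl : j ≠ l.rev := fun h => hl.2 (by rw [h, Fin.rev_rev])
        have hr := rev_diff n μ j l.rev
        rw [Fin.rev_rev] at hr
        show F _ = F _
        rw [hr]
        exact heven _ (diff_ne μ hμ hjl)
    rw [hf]
    simp only
    rw [h1, h2, neg_mul]
  have key : (∑ j : Fin n, ∑ k ∈ univ.erase j, f j k)
      = - ∑ j : Fin n, ∑ k ∈ univ.erase j, f j k := by
    nth_rewrite 1 [← Equiv.sum_comp (Fin.revPerm) (fun j => ∑ k ∈ univ.erase j, f j k)]
    rw [← Finset.sum_neg_distrib]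
    refine Finset.sum_congr rfl fun j _ => ?_
    rw [← Finset.sum_neg_distrib]
    refine Finset.sum_nbij' (fun k => k.rev) (fun k => k.rev) ?_ ?_ ?_ ?_ ?_
    · intro k hk
      simp only [mem_erase, mem_univ, and_true, Fin.revPerm_apply] at hk ⊢
      exact fun h => hk (by rw [← h, Fin.rev_rev])
    · intro k hk
      simp only [mem_erase, mem_univ, and_true, Fin.revPerm_apply] at hk ⊢
      exact fun h => hk (Fin.rev_injective h)
    · intro k _; exact Fin.rev_rev k
    · intro k _; exact Fin.rev_rev k
    · intro k hk
      simp only [mem_erase, mem_univ, and_true, Fin.revPerm_apply] at hk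
      have hkr : k.rev ≠ j := fun h => hk (by rw [← h, Fin.rev_rev])
      have h3 := hneg j k.rev hkr
      rw [Fin.rev_rev] at h3
      show f j.rev k = - f j k.rev
      exact h3
  have : (∑ j : Fin n, ∑ k ∈ univ.erase j, f j k) = 0 := by linarith
  exact this
end

section
/- For n ≥ 2 and pairwise distinct real numbers x₁, …, xₙ with x_j - x_k ≠ 0 for j ≠ k, one has Σ_{j=1}^n Π_{k≠j} coth(x_j - x_k) = 1 if n is odd, and Σ_{j=1}^n Π_{k≠j} coth(x_j - x_k) = 0 if n is even. -/
open Finset Polynomial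

private lemma coth_step {ι : Type*} [DecidableEq ι] (t : ι → ℝ) (a : ι) (s : Finset ι)
    (ha : a ∉ s) (hs : s.Nonempty)
    (hinj : Set.InjOn t (insert a s : Finset ι)) :
    ∑ j ∈ insert a s, ∏ k ∈ (insert a s).erase j, (t j + t k) / (t j - t k)
      = 1 - ∑ j ∈ s, ∏ k ∈ s.erase j, (t j + t k) / (t j - t k) := by
  set m := s.card with hm
  have hm1 : 1 ≤ m := Finset.card_pos.mpr hs
  have hmem : ∀ j ∈ s, (j : ι) ∈ (insert a s : Finset ι) := fun j hj => by simp [hj]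
  have hamem : a ∈ (insert a s : Finset ι) := by simp
  have hne : ∀ j ∈ s, ∀ k ∈ s, j ≠ k → t j - t k ≠ 0 := by
    intro j hj k hk hjk
    exact sub_ne_zero.2 fun h => hjk (hinj (by simp [hj]) (by simp [hk]) h)
  have hane : ∀ k ∈ s, t a - t k ≠ 0 := by
    intro k hk
    exact sub_ne_zero.2 fun h => ha (by
      have : a = k := hinj hamem (by simp [hk]) h
      exact this ▸ hk)
  set c : ι → ℝ := fun j => ∏ k ∈ s.erase j, (t j + t k) / (t j - t k) with hc
  set D : ℝ[X] := ∏ k ∈ s, (X - C (t k)) with hD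
  set P : ℝ[X] := (∏ k ∈ s, (X + C (t k)))
      - ∑ j ∈ s, C (c j) * ((X + C (t j)) * ∏ k ∈ s.erase j, (X - C (t k))) with hP
  have hDmon : D.Monic := monic_prod_of_monic _ _ fun k _ => monic_X_sub_C _
  have hDdeg : D.natDegree = m := by
    rw [hD, natDegree_prod_of_monic _ _ fun k _ => monic_X_sub_C _]
    simp [hm]
  have hM1mon : (∏ k ∈ s, (X + C (t k))).Monic :=
    monic_prod_of_monic _ _ fun k _ => monic_X_add_C _
  have hM1deg : (∏ k ∈ s, (X + C (t k))).natDegree = m := by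
    rw [natDegree_prod_of_monic _ _ fun k _ => monic_X_add_C _]
    simp [hm]
  have hMjmon : ∀ j ∈ s, ((X + C (t j)) * ∏ k ∈ s.erase j, (X - C (t k))).Monic :=
    fun j hj => (monic_X_add_C _).mul (monic_prod_of_monic _ _ fun k _ => monic_X_sub_C _)
  have hMjdeg : ∀ j ∈ s, ((X + C (t j)) * ∏ k ∈ s.erase j, (X - C (t k))).natDegree = m := by
    intro j hj
    rw [(monic_X_add_C _).natDegree_mul (monic_prod_of_monic _ _ fun k _ => monic_X_sub_C _),
      natDegree_prod_of_monic _ _ fun k _ => monic_X_sub_C _]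
    simp [Finset.card_erase_of_mem hj]
    omega
  set A : ℝ := 1 - ∑ j ∈ s, c j with hA
  have hPcoeff : P.coeff m = A := by
    rw [hP, Polynomial.coeff_sub, Polynomial.finset_sum_coeff]
    rw [← hM1deg, hM1mon.coeff_natDegree, hM1deg]
    rw [hA]
    congr 1
    apply Finset.sum_congr rfl
    intro j hj
    rw [Polynomial.coeff_C_mul, ← hMjdeg j hj, (hMjmon j hj).coeff_natDegree, mul_one]
  have hPdeg : P.natDegree ≤ m := by
    refine le_trans (natDegree_sub_le _ _) (max_le hM1deg.le ?_)
    refine natDegree_sum_le_of_forall_le _ _ fun j hj => ?_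
    refine le_trans (natDegree_mul_le) ?_
    simp [hMjdeg j hj]
  -- roots of P
  have hPeval : ∀ l ∈ s, P.eval (t l) = 0 := by
    intro l hl
    have hsum : ∑ j ∈ s, (c j * ((t l + t j) * ∏ k ∈ s.erase j, (t l - t k)))
        = c l * ((t l + t l) * ∏ k ∈ s.erase l, (t l - t k)) := by
      refine Finset.sum_eq_single l (fun j hj hjl => ?_) (fun h => absurd hl h)
      have : (∏ k ∈ s.erase j, (t l - t k)) = 0 :=
        Finset.prod_eq_zero (Finset.mem_erase.2 ⟨fun h => hjl h.symm, hl⟩) (by simp)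
      rw [this]; ring
    have hcl : c l * ∏ k ∈ s.erase l, (t l - t k) = ∏ k ∈ s.erase l, (t l + t k) := by
      rw [hc, ← Finset.prod_mul_distrib]
      refine Finset.prod_congr rfl fun k hk => ?_
      rw [div_mul_cancel₀]
      exact hne l hl k (Finset.mem_of_mem_erase hk) (Finset.ne_of_mem_erase hk).symm
    have hfull : ∏ k ∈ s, (t l + t k) = (t l + t l) * ∏ k ∈ s.erase l, (t l + t k) :=
      (Finset.mul_prod_erase s _ hl).symm
    simp only [hP, eval_sub, eval_prod, eval_finset_sum, eval_mul, eval_add, eval_X, eval_C]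
    rw [hsum, hfull, ← hcl]
    ring
  -- P = C A * D
  have hQ : P = C A * D := by
    set Q : ℝ[X] := P - C A * D with hQdef
    have hQcoeff : Q.coeff m = 0 := by
      rw [hQdef, Polynomial.coeff_sub, hPcoeff, Polynomial.coeff_C_mul, ← hDdeg,
        hDmon.coeff_natDegree]
      ring
    have hQdeg : Q.natDegree ≤ m := by
      refine le_trans (natDegree_sub_le _ _) (max_le hPdeg ?_)
      refine le_trans (natDegree_mul_le) ?_
      simp [hDdeg]
    have hQlt : Q.natDegree < m := by
      rcases lt_or_eq_of_le hQdeg with h | h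
      · exact h
      · have : Q = 0 := Polynomial.leadingCoeff_eq_zero.mp (by rw [leadingCoeff, h, hQcoeff])
        rw [this]; simpa using Nat.succ_le_iff.mp hm1
    have hQeval : ∀ y ∈ s.image t, Q.eval y = 0 := by
      intro y hy
      obtain ⟨l, hl, rfl⟩ := Finset.mem_image.1 hy
      have hDl : D.eval (t l) = 0 := by
        rw [hD, eval_prod]
        exact Finset.prod_eq_zero hl (by simp)
      simp [hQdef, hPeval l hl, hDl]
    have hcard : Q.natDegree < (s.image t).card := by
      rwa [Finset.card_image_of_injOn (hinj.mono (by simp [Finset.subset_insert]))]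
    have := Polynomial.eq_zero_of_natDegree_lt_card_of_eval_eq_zero' Q (s.image t) hQeval hcard
    exact sub_eq_zero.mp this
  -- evaluate at t a
  have hDa : D.eval (t a) = ∏ k ∈ s, (t a - t k) := by simp [hD, eval_prod]
  have hDane : D.eval (t a) ≠ 0 := by
    rw [hDa]; exact Finset.prod_ne_zero_iff.2 fun k hk => hane k hk
  have hPa : P.eval (t a) = A * D.eval (t a) := by rw [hQ]; simp
  -- rewrite the LHS
  rw [Finset.sum_insert ha]
  have h1 : (insert a s).erase a = s := Finset.erase_insert ha
  have h2 : ∀ j ∈ s, ∏ k ∈ (insert a s).erase j, (t j + t k) / (t j - t k)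
      = (t j + t a) / (t j - t a) * c j := by
    intro j hj
    have hja : j ≠ a := fun h => ha (h ▸ hj)
    rw [Finset.erase_insert_of_ne hja.symm,
      Finset.prod_insert (fun h => ha (Finset.mem_of_mem_erase h))]
  rw [h1, Finset.sum_congr rfl h2]
  -- multiply by D.eval (t a)
  have key : ((∏ k ∈ s, (t a + t k) / (t a - t k))
      + ∑ j ∈ s, (t j + t a) / (t j - t a) * c j) * D.eval (t a) = A * D.eval (t a) := by
    rw [← hPa]
    simp only [hP, eval_sub, eval_prod, eval_finset_sum, eval_mul, eval_add, eval_X, eval_C]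
    rw [add_mul, Finset.sum_mul]
    have e1 : (∏ k ∈ s, (t a + t k) / (t a - t k)) * D.eval (t a)
        = ∏ k ∈ s, (t a + t k) := by
      rw [hDa, ← Finset.prod_mul_distrib]
      exact Finset.prod_congr rfl fun k hk => div_mul_cancel₀ _ (hane k hk)
    have e2 : ∀ j ∈ s, (t j + t a) / (t j - t a) * c j * D.eval (t a)
        = -(c j * ((t a + t j) * ∏ k ∈ s.erase j, (t a - t k))) := by
      intro j hj
      have hDsplit : D.eval (t a) = (t a - t j) * ∏ k ∈ s.erase j, (t a - t k) := by
        rw [hDa]; exact (Finset.mul_prod_erase s _ hj).symm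
      have hja : t j - t a ≠ 0 := sub_ne_zero.2 fun h =>
        (hane j hj) (by rw [h]; ring)
      rw [hDsplit]
      field_simp
      ring
    rw [e1, Finset.sum_congr rfl e2, Finset.sum_neg_distrib]
    ring
  have := mul_right_cancel₀ hDane key
  rw [this, hA]

private lemma coth_key {ι : Type*} [DecidableEq ι] (t : ι → ℝ) :
    ∀ (s : Finset ι), s.Nonempty → Set.InjOn t s →
    ∑ j ∈ s, ∏ k ∈ s.erase j, (t j + t k) / (t j - t k)
      = if Odd s.card then 1 else 0 := by
  intro s
  induction s using Finset.cons_induction with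
  | empty => intro h; simp at h
  | cons a s ha ih =>
    intro _ hinj
    rcases s.eq_empty_or_nonempty with rfl | hs
    · simp
    · have hinj' : Set.InjOn t (insert a s : Finset ι) := by
        rwa [← Finset.cons_eq_insert a s ha]
      rw [Finset.cons_eq_insert, coth_step t a s ha hs hinj',
        ih hs (hinj'.mono (by simp [Finset.subset_insert]))]
      rw [Finset.card_insert_of_notMem ha]
      rcases Nat.even_or_odd s.card with h | h
      · simp [Nat.not_odd_iff_even.2 h, h.add_one]
      · simp [h, Nat.not_odd_iff_even.2 h.add_one]

/-- `∑ⱼ ∏_{k≠j} coth(xⱼ−x_k)` equals `1` for odd `n` and `0` for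
even `n`, for all pairwise distinct real `x₁, …, xₙ` (`n ≥ 2`). -/
theorem stmt_12 (n : ℕ) (hn : 2 ≤ n) (x : Fin n → ℝ)
    (hx : Function.Injective x) :
    (Odd n →
      ∑ j : Fin n, ∏ k ∈ univ.erase j,
        Real.cosh (x j - x k) / Real.sinh (x j - x k) = 1) ∧
    (Even n →
      ∑ j : Fin n, ∏ k ∈ univ.erase j,
        Real.cosh (x j - x k) / Real.sinh (x j - x k) = 0) := by
  set t : Fin n → ℝ := fun i => Real.exp (2 * x i) with ht
  have htinj : Function.Injective t := fun i j h => by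
    have := Real.exp_injective h
    exact hx (by linarith)
  have hcoth : ∀ j k : Fin n, j ≠ k →
      Real.cosh (x j - x k) / Real.sinh (x j - x k) = (t j + t k) / (t j - t k) := by
    intro j k hjk
    have hxjk : x j - x k ≠ 0 := sub_ne_zero.2 fun h => hjk (hx h)
    have hs : Real.sinh (x j - x k) ≠ 0 := Real.sinh_ne_zero.2 hxjk
    have hts : t j - t k ≠ 0 := sub_ne_zero.2 fun h => hjk (htinj h)
    rw [div_eq_div_iff hs hts, Real.cosh_eq, Real.sinh_eq]
    have htt : ∀ i, t i = Real.exp (x i) * Real.exp (x i) := fun i => by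
      simp only [ht]; rw [← Real.exp_add]; ring_nf
    have e3 : Real.exp (x j - x k) = Real.exp (x j) / Real.exp (x k) := Real.exp_sub _ _
    have e4 : Real.exp (-(x j - x k)) = Real.exp (x k) / Real.exp (x j) := by
      rw [neg_sub]; exact Real.exp_sub _ _
    rw [htt j, htt k, e3, e4]
    field_simp

  have hsum : ∑ j : Fin n, ∏ k ∈ univ.erase j,
      Real.cosh (x j - x k) / Real.sinh (x j - x k)
      = if Odd n then 1 else 0 := by
    have := coth_key t Finset.univ (Finset.univ_nonempty_iff.2 ⟨⟨0, by omega⟩⟩)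
      (htinj.injOn)
    rw [Finset.card_univ, Fintype.card_fin] at this
    rw [← this]
    refine Finset.sum_congr rfl fun j _ => Finset.prod_congr rfl fun k hk => ?_
    exact hcoth j k (Finset.ne_of_mem_erase hk).symm
  constructor
  · intro h; rw [hsum, if_pos h]
  · intro h; rw [hsum, if_neg (Nat.not_odd_iff_even.2 h)]
end

section
/- Let n ≥ 2 be even. For pairwise distinct real numbers x₁, …, xₙ, one has Σ_{j=1}^n Π_{k≠j} 1/sinh(x_j - x_k) = 0. -/
open Finset Polynomial

private lemma leadingCoeff_basisDivisor' (x y : ℝ) :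
    (Lagrange.basisDivisor x y).leadingCoeff = (x - y)⁻¹ := by
  unfold Lagrange.basisDivisor
  rw [leadingCoeff_mul, leadingCoeff_C, (monic_X_sub_C y).leadingCoeff, mul_one]

private lemma coeff_basis' {n : ℕ} (t : Fin n → ℝ) (ht : Function.Injective t) (j : Fin n) :
    (Lagrange.basis univ t j).coeff (n - 1) = ∏ k ∈ univ.erase j, (t j - t k)⁻¹ := by
  have hd := Lagrange.degree_basis ht.injOn (mem_univ j)
  rw [card_univ, Fintype.card_fin] at hd
  have hnd : (Lagrange.basis univ t j).natDegree = n - 1 := natDegree_eq_of_degree_eq_some hd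
  rw [← hnd, ← leadingCoeff]
  unfold Lagrange.basis
  rw [leadingCoeff_prod]
  exact Finset.prod_congr rfl fun k _ => leadingCoeff_basisDivisor' _ _

private lemma lagrange_sum' {n : ℕ} (m : ℕ) (hm : m + 1 < n) (t : Fin n → ℝ)
    (ht : Function.Injective t) :
    ∑ j : Fin n, t j ^ m * ∏ k ∈ univ.erase j, (t j - t k)⁻¹ = 0 := by
  have h1 : (X ^ m : ℝ[X]) = Lagrange.interpolate univ t (fun i => t i ^ m) := by
    have := Lagrange.eq_interpolate (s := univ) (v := t) ht.injOn
      (f := X ^ m) (by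
        rw [degree_X_pow, card_univ, Fintype.card_fin]
        exact_mod_cast lt_trans (Nat.lt_succ_self m) hm)
    simpa using this
  have h2 := congrArg (fun p => Polynomial.coeff p (n - 1)) h1
  simp only [Lagrange.interpolate_apply, finset_sum_coeff, coeff_C_mul, coeff_X_pow] at h2
  rw [if_neg (by omega)] at h2
  rw [show (0:ℝ) = ∑ x : Fin n, t x ^ m * (Lagrange.basis univ t x).coeff (n-1) from h2]
  exact Finset.sum_congr rfl fun j _ => by rw [coeff_basis' t ht j]

private lemma csch_eq' (a b : ℝ) (hab : a ≠ b) :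
    1 / Real.sinh (a - b) =
      2 * Real.exp a * Real.exp b * (Real.exp (2*a) - Real.exp (2*b))⁻¹ := by
  have h1 : Real.sinh (a - b)
      = (Real.exp (2*a) - Real.exp (2*b)) / (2 * Real.exp a * Real.exp b) := by
    rw [Real.sinh_eq, Real.exp_sub, neg_sub, Real.exp_sub, two_mul, two_mul,
      Real.exp_add, Real.exp_add]
    have := Real.exp_pos a
    have := Real.exp_pos b
    field_simp
  have h2 : Real.exp (2*a) - Real.exp (2*b) ≠ 0 := sub_ne_zero_of_ne fun h => hab (by
    have := Real.exp_injective h; linarith)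
  rw [h1, one_div_div, div_eq_mul_inv]

/-- for even `n ≥ 2`, `∑ⱼ ∏_{k≠j} 1/sinh(xⱼ−x_k) = 0` for all
pairwise distinct real `x₁, …, xₙ`. -/
theorem stmt_14 (n : ℕ) (hn : 2 ≤ n) (hneven : Even n) (x : Fin n → ℝ)
    (hx : Function.Injective x) :
    ∑ j : Fin n, ∏ k ∈ univ.erase j, 1 / Real.sinh (x j - x k) = 0 := by
  obtain ⟨p, rfl⟩ := hneven
  obtain ⟨q, rfl⟩ : ∃ q, p = q + 1 := ⟨p - 1, by omega⟩
  have htinj : Function.Injective (fun j : Fin (q+1+(q+1)) => Real.exp (2 * x j)) :=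
    fun a b h => hx (by
      have := Real.exp_injective h; linarith)
  have key : ∀ j : Fin (q+1+(q+1)), ∏ k ∈ univ.erase j, 1 / Real.sinh (x j - x k)
      = 2 ^ (2*q+1) * (∏ i, Real.exp (x i)) *
        (Real.exp (2 * x j) ^ q *
          ∏ k ∈ univ.erase j, (Real.exp (2 * x j) - Real.exp (2 * x k))⁻¹) := by
    intro j
    have hterm : ∀ k ∈ univ.erase j, 1 / Real.sinh (x j - x k)
        = 2 * Real.exp (x j) * Real.exp (x k)
          * (Real.exp (2 * x j) - Real.exp (2 * x k))⁻¹ := fun k hk =>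
      csch_eq' _ _ (fun h => (mem_erase.mp hk).1 (hx h).symm)
    rw [Finset.prod_congr rfl hterm, prod_mul_distrib, prod_mul_distrib, prod_const,
      card_erase_of_mem (mem_univ j), card_univ, Fintype.card_fin,
      show q + 1 + (q + 1) - 1 = 2*q+1 from by omega]
    rw [← Finset.mul_prod_erase univ (fun i => Real.exp (x i)) (mem_univ j)]
    have ht : Real.exp (2 * x j) = Real.exp (x j) ^ 2 := by
      rw [two_mul, Real.exp_add, sq]
    rw [ht]
    ring
  rw [Finset.sum_congr rfl fun j _ => key j, ← Finset.mul_sum,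
    lagrange_sum' q (by omega) _ htinj, mul_zero]
end
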